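/- arXiv:2505.01240 — 11 statements merged into one kernel-verified Lean document; each statement's English description precedes it below -/
import Mathlib

section
/- Assume the support S = {j : (v_*)_j ≠ 0} is nonempty, v_* ∈ V_b, and q_* = v_* + τη where η ∈ V satisfies: η_j = (v_*)_j/‖(v_*)_j‖ for every j ∈ S, ‖η_j‖ < 1 for every j ∉ S, and η is orthogonal to U (so that q_* is a fixed point of H_τ lying in the interior of Q with S_τ(q_*) = v_*). Let μ = min_{j ∈ S} ‖(v_*)_j‖ and c = sup{⟨u, w⟩ : u ∈ U, w ∈ W, ‖u‖ = ‖w‖ = 1} (c = 0 if U or W is the zero subspace). If a sequence (q_k) in V satisfies q_{k+1} = H_τ(q_k) for all k and q_k → q_*, then there exists K ∈ ℕ such that for all k ≥ K, ‖q_k − q_*‖ ≤ (c + 2τ/μ)^{k−K} ‖q_K − q_*‖. -/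
open scoped RealInnerProductSpace
open scoped Classical

noncomputable section

/-- The space `V` of `N`-tuples of vectors in `ℝ^d`, with the ℓ²-product inner product. -/
abbrev Vsp (N d : ℕ) : Type := PiLp 2 (fun _ : Fin N => EuclideanSpace ℝ (Fin d))

/-- The blockwise shrinkage (block soft-thresholding) operator `S_τ`. -/
noncomputable def shrink {N d : ℕ} (τ : ℝ) (q : Vsp N d) : Vsp N d :=
  WithLp.toLp 2 (fun j => if ‖q j‖ ≤ τ then 0 else q j - (τ / ‖q j‖) • q j)

/-- The blockwise normalization operator `𝒩`. -/
noncomputable def nrmOp {N d : ℕ} (q : Vsp N d) : Vsp N d :=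
  WithLp.toLp 2 (fun j => if q j = 0 then 0 else ‖q j‖⁻¹ • q j)

/-- The subspace of vectors in `V` vanishing on a given set of block indices. -/
def vanishingOn {N d : ℕ} (s : Set (Fin N)) : Submodule ℝ (Vsp N d) where
  carrier := {z | ∀ j ∈ s, z j = 0}
  add_mem' := by
    intro a b ha hb j hj
    simp only [PiLp.add_apply, ha j hj, hb j hj, add_zero]
  zero_mem' := by
    intro j hj
    simp only [PiLp.zero_apply]
  smul_mem' := by
    intro c a ha j hj
    simp only [PiLp.smul_apply, ha j hj, smul_zero]

set_option maxHeartbeats 1000000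
section Aux
variable {E : Type*} [NormedAddCommGroup E] [InnerProductSpace ℝ E] [FiniteDimensional ℝ E]

noncomputable def pj (U : Submodule ℝ E) (x : E) : E := (Submodule.orthogonalProjectionOnto U x : E)

lemma pj_mem (U : Submodule ℝ E) (x : E) : pj U x ∈ U := SetLike.coe_mem _

lemma pj_inner (U : Submodule ℝ E) (x w : E) (hw : w ∈ U) : ⟪x - pj U x, w⟫ = 0 :=
  Submodule.starProjection_inner_eq_zero x w hw

lemma pj_add (U : Submodule ℝ E) (x y : E) : pj U (x + y) = pj U x + pj U y := by
  unfold pj; rw [map_add]; rfl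

lemma pj_sub (U : Submodule ℝ E) (x y : E) : pj U (x - y) = pj U x - pj U y := by
  unfold pj; rw [map_sub]; rfl

lemma pj_smul (U : Submodule ℝ E) (t : ℝ) (x : E) : pj U (t • x) = t • pj U x := by
  unfold pj; rw [map_smul]; rfl

lemma pj_of_mem (U : Submodule ℝ E) (x : E) (h : x ∈ U) : pj U x = x := by
  unfold pj; exact (Submodule.starProjection_eq_self_iff (K := U)).2 h

lemma pj_of_orth (U : Submodule ℝ E) (x : E) (h : x ∈ Uᗮ) : pj U x = 0 := by
  unfold pj; rw [Submodule.orthogonalProjectionOnto_apply_of_mem_orthogonal h]; rfl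

lemma pj_pyth (U : Submodule ℝ E) (x : E) : ‖pj U x‖^2 + ‖x - pj U x‖^2 = ‖x‖^2 := by
  have h2 : ⟪x - pj U x, pj U x⟫ = 0 := pj_inner U x _ (pj_mem U x)
  have h := norm_add_sq_real (pj U x) (x - pj U x)
  rw [real_inner_comm] at h2
  rw [h2] at h
  have hx : pj U x + (x - pj U x) = x := by abel
  rw [hx] at h
  linarith

lemma pj_norm_le (U : Submodule ℝ E) (x : E) : ‖pj U x‖ ≤ ‖x‖ := by
  have := pj_pyth U x
  have h1 := sq_nonneg ‖x - pj U x‖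
  nlinarith [norm_nonneg (pj U x), norm_nonneg x]

lemma pj_norm_sub_le (U : Submodule ℝ E) (x : E) : ‖x - pj U x‖ ≤ ‖x‖ := by
  have := pj_pyth U x
  nlinarith [norm_nonneg (x - pj U x), norm_nonneg x, sq_nonneg ‖pj U x‖]

lemma sq_le_imp {x y : ℝ} (hx : 0 ≤ x) (hy : 0 ≤ y) (h : x^2 ≤ y^2) : x ≤ y := by nlinarith

lemma nrm_lip (a b : E) (ha : a ≠ 0) (hb : b ≠ 0) :
    ‖‖a‖⁻¹ • a - ‖b‖⁻¹ • b‖ ≤ 2 * ‖a - b‖ / ‖a‖ := by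
  have hna : (0:ℝ) < ‖a‖ := norm_pos_iff.2 ha
  have hnb : (0:ℝ) < ‖b‖ := norm_pos_iff.2 hb
  have key : ‖a‖⁻¹ • a - ‖b‖⁻¹ • b = ‖a‖⁻¹ • (a - b) + (‖a‖⁻¹ - ‖b‖⁻¹) • b := by
    rw [smul_sub, sub_smul]; abel
  rw [key]
  have h1 : ‖‖a‖⁻¹ • (a - b)‖ = ‖a - b‖ / ‖a‖ := by
    rw [norm_smul, norm_inv, norm_norm]; rw [div_eq_inv_mul]
  have h2 : ‖(‖a‖⁻¹ - ‖b‖⁻¹) • b‖ ≤ ‖a - b‖ / ‖a‖ := by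
    rw [norm_smul, Real.norm_eq_abs]
    have : |‖a‖⁻¹ - ‖b‖⁻¹| = |‖b‖ - ‖a‖| / (‖a‖ * ‖b‖) := by
      rw [eq_div_iff (by positivity : (0:ℝ) < ‖a‖ * ‖b‖).ne']
      rw [← abs_of_pos (show (0:ℝ) < ‖a‖ * ‖b‖ by positivity), ← abs_mul]
      congr 1
      field_simp
    rw [this]
    have hd : |‖b‖ - ‖a‖| ≤ ‖a - b‖ := by
      rw [abs_sub_comm]
      exact abs_norm_sub_norm_le a b
    calc |‖b‖ - ‖a‖| / (‖a‖ * ‖b‖) * ‖b‖ = |‖b‖ - ‖a‖| / ‖a‖ := by field_simp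
      _ ≤ ‖a - b‖ / ‖a‖ := by gcongr
  calc ‖‖a‖⁻¹ • (a - b) + (‖a‖⁻¹ - ‖b‖⁻¹) • b‖
      ≤ ‖‖a‖⁻¹ • (a - b)‖ + ‖(‖a‖⁻¹ - ‖b‖⁻¹) • b‖ := norm_add_le _ _
    _ ≤ ‖a - b‖ / ‖a‖ + ‖a - b‖ / ‖a‖ := by rw [h1]; linarith
    _ = 2 * ‖a - b‖ / ‖a‖ := by ring


variable {E : Type*} [NormedAddCommGroup E] [InnerProductSpace ℝ E] [FiniteDimensional ℝ E]

lemma projW_bound (U W : Submodule ℝ E) (c : ℝ) (hc0 : 0 ≤ c)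
    (hstar : ∀ u ∈ U, ∀ w ∈ W, ⟪u, w⟫ ≤ c * ‖u‖ * ‖w‖)
    (x : E) (hx : x ∈ W) : ‖pj U x‖ ≤ c * ‖x‖ := by
  have h1 : ⟪pj U x, x⟫ = ‖pj U x‖^2 := by
    have h2 : ⟪x - pj U x, pj U x⟫ = 0 := pj_inner U x _ (pj_mem U x)
    have : ⟪pj U x, x - pj U x⟫ = 0 := by rw [real_inner_comm]; exact h2
    have h3 : ⟪pj U x, x⟫ = ⟪pj U x, pj U x⟫ + ⟪pj U x, x - pj U x⟫ := by
      rw [← inner_add_right]; congr 1; abel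
    rw [h3, this, real_inner_self_eq_norm_sq]; ring
  have h4 := hstar (pj U x) (pj_mem U x) x hx
  rw [h1] at h4
  rcases eq_or_lt_of_le (norm_nonneg (pj U x)) with h5 | h5
  · rw [← h5]; positivity
  · nlinarith

lemma dual_bound (U W : Submodule ℝ E) (c : ℝ) (hc0 : 0 ≤ c)
    (hstar : ∀ u ∈ U, ∀ w ∈ W, ⟪u, w⟫ ≤ c * ‖u‖ * ‖w‖)
    (y : E) (hyW : y ∈ Wᗮ) (hyF : ∀ f ∈ Uᗮ ⊓ Wᗮ, ⟪y, f⟫ = 0) :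
    ‖y - pj U y‖ ≤ c * ‖y‖ := by
  rcases le_or_gt 1 c with hc1 | hc1
  · calc ‖y - pj U y‖ ≤ ‖y‖ := pj_norm_sub_le U y
      _ = 1 * ‖y‖ := (one_mul _).symm
      _ ≤ c * ‖y‖ := by gcongr
  set m : E →ₗ[ℝ] E := LinearMap.id - (W.subtype.comp (Submodule.orthogonalProjectionOnto W).toLinearMap) with hm
  have hmval : ∀ x : E, m x = x - pj W x := fun x => rfl
  set B : Submodule ℝ E := U.map m with hB
  have hBW : ∀ z ∈ B, z ∈ Wᗮ := by
    intro z hz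
    obtain ⟨u, hu, rfl⟩ := hz
    rw [Submodule.mem_orthogonal']
    intro w hw
    rw [hmval]
    exact pj_inner W u w hw
  have hBF : ∀ z ∈ B, ∀ f, f ∈ Uᗮ → f ∈ Wᗮ → ⟪z, f⟫ = 0 := by
    intro z hz f hfU hfW
    obtain ⟨u, hu, rfl⟩ := hz
    rw [hmval, inner_sub_left, hfU u hu, hfW _ (pj_mem W u)]
    ring
  have hyB : y ∈ B := by
    set y' : E := y - pj B y with hy'
    have h1 : y' ∈ Wᗮ := by
      rw [Submodule.mem_orthogonal']
      intro w hw
      rw [hy', inner_sub_left]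
      have ha : ⟪y, w⟫ = 0 := by rw [real_inner_comm]; exact hyW w hw
      have hb : ⟪pj B y, w⟫ = 0 := by
        rw [real_inner_comm]; exact hBW _ (pj_mem B y) w hw
      rw [ha, hb]; ring
    have h2 : y' ∈ Uᗮ := by
      rw [Submodule.mem_orthogonal']
      intro u hu
      have h3 : ⟪y', m u⟫ = 0 := pj_inner B y (m u) (Submodule.mem_map_of_mem hu)
      rw [hmval, inner_sub_right] at h3
      have h4 : ⟪y', pj W u⟫ = 0 := by
        rw [real_inner_comm]; exact h1 (pj W u) (pj_mem W u)
      rw [h4] at h3; linarith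
    have h5 : ⟪y, y'⟫ = 0 := hyF y' (Submodule.mem_inf.2 ⟨h2, h1⟩)
    have h6 : ⟪y - pj B y, y - pj B y⟫ = 0 := by
      rw [inner_sub_right]
      have h8 : ⟪y - pj B y, pj B y⟫ = 0 := pj_inner B y _ (pj_mem B y)
      have h9 : ⟪y - pj B y, y⟫ = 0 := by
        rw [real_inner_comm]; rw [hy'] at h5; exact h5
      rw [h8, h9]; ring
    have h8 : y - pj B y = 0 := inner_self_eq_zero.1 h6
    have h9 : y = pj B y := sub_eq_zero.1 h8
    rw [h9]; exact pj_mem B y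
  obtain ⟨u, huU, huy⟩ := hyB
  rw [hmval] at huy
  set w : E := pj W u with hw
  have hyuw : y = u - w := huy.symm
  have hwW : w ∈ W := pj_mem W u
  have huw : ⟪u - w, w⟫ = 0 := pj_inner W u w hwW
  set t2 : ℝ := ‖w‖^2 with ht2
  set h' : ℝ := ‖u‖^2 with hh
  have hinner_uw : ⟪u, w⟫ = t2 := by
    rw [inner_sub_left, real_inner_self_eq_norm_sq] at huw
    linarith
  have hynorm : ‖y‖^2 = h' - t2 := by
    rw [hyuw]
    have hns := norm_sub_sq_real u w
    rw [hinner_uw] at hns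
    rw [hns]; ring
  set pw : E := pj U w with hpw
  set m2 : ℝ := ‖pw‖^2 with hm2
  have hupw : ⟪u, pw⟫ = t2 := by
    have h1 : ⟪w - pw, u⟫ = 0 := by
      rw [hpw]; exact pj_inner U w u huU
    rw [inner_sub_left] at h1
    have h2 : ⟪w, u⟫ = t2 := by rw [real_inner_comm]; exact hinner_uw
    rw [h2] at h1
    rw [real_inner_comm]
    linarith
  have hpjy : pj U y = u - pw := by
    rw [hyuw, pj_sub, pj_of_mem U u huU, hpw]
  have hpww : ⟪pw, w⟫ = m2 := by
    have h4 : ⟪w - pw, pw⟫ = 0 := pj_inner U w _ (pj_mem U w)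
    rw [inner_sub_left, real_inner_self_eq_norm_sq] at h4
    rw [real_inner_comm]
    rw [hm2]; linarith
  have hnormPy : ‖y - pj U y‖^2 = t2 - m2 := by
    rw [hpjy, hyuw]
    have heq : u - w - (u - pw) = -(w - pw) := by abel
    rw [heq, norm_neg]
    have h2 := pj_pyth U w
    rw [← hpw, ← hm2, ← ht2] at h2
    linarith
  set D : ℝ := t2 - m2 with hD
  set Ee : ℝ := h' - t2 with hE
  have hstar1 : D ≤ c * ‖u - pw‖ * ‖w‖ := by
    have h1 := hstar (u - pw) (Submodule.sub_mem U huU (pj_mem U w)) w hwW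
    rw [inner_sub_left, hinner_uw, hpww] at h1
    exact h1
  have hnupw : ‖u - pw‖^2 = Ee - D := by
    have hns := norm_sub_sq_real u pw
    rw [hupw, ← hm2] at hns
    rw [hns, hE, hD, hh]; ring
  have hstar2 : t2 ≤ c * ‖u‖ * ‖w‖ := by
    have h1 := hstar u huU w hwW
    rw [hinner_uw] at h1; exact h1
  have hD0 : 0 ≤ D := by rw [← hnormPy]; positivity
  have hE0 : 0 ≤ Ee := by rw [← hynorm]; positivity
  have ht20 : 0 ≤ t2 := sq_nonneg _
  have key : D ≤ c^2 * Ee := by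
    rcases eq_or_lt_of_le ht20 with ht0 | ht0
    · have hm20 : 0 ≤ m2 := sq_nonneg _
      nlinarith
    · have hw0 : (0:ℝ) < ‖w‖ := by
        rcases eq_or_lt_of_le (norm_nonneg w) with hz | hz
        · exfalso; rw [ht2, ← hz] at ht0; simp at ht0
        · exact hz
      have hu0 : (0:ℝ) < ‖u‖ := by nlinarith [norm_nonneg u]
      have hD2 : D^2 ≤ c^2 * t2 * (Ee - D) := by
        have hrhs : 0 ≤ c * ‖u - pw‖ * ‖w‖ := by positivity
        have h := mul_le_mul hstar1 hstar1 hD0 hrhs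
        have h5 : (c * ‖u - pw‖ * ‖w‖) * (c * ‖u - pw‖ * ‖w‖)
            = c^2 * t2 * (Ee - D) := by
          rw [ht2, ← hnupw]; ring
        rw [pow_two]; linarith [h, h5]
      have hlin : (1 - c^2) * t2 ≤ c^2 * Ee := by
        have h2 : t2 * t2 ≤ (c * ‖u‖ * ‖w‖) * (c * ‖u‖ * ‖w‖) :=
          mul_le_mul hstar2 hstar2 ht20 (by positivity)
        have h3 : t2 * t2 ≤ (c^2 * h') * t2 := by
          have h5 : (c * ‖u‖ * ‖w‖) * (c * ‖u‖ * ‖w‖) = (c^2 * h') * t2 := by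
            rw [hh, ht2]; ring
          linarith [h2, h5]
        have h4 : t2 ≤ c^2 * h' := le_of_mul_le_mul_right (by linarith) ht0
        nlinarith [h4, hE]
      by_contra hcon
      push_neg at hcon
      rcases le_or_gt Ee D with hED | hED
      · have h1 : c^2 * t2 * (Ee - D) ≤ 0 := by
          apply mul_nonpos_of_nonneg_of_nonpos (by positivity)
          linarith
        nlinarith [mul_nonneg (sq_nonneg c) hE0]
      · have p1 : Ee - D ≤ (1 - c^2) * Ee := by nlinarith [mul_nonneg (sq_nonneg c) hE0]
        have p2 : c^2 * t2 * (Ee - D) ≤ c^2 * t2 * ((1 - c^2) * Ee) :=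
          mul_le_mul_of_nonneg_left p1 (by positivity)
        have p4 : ((1 - c^2) * t2) * (c^2 * Ee) ≤ (c^2 * Ee) * (c^2 * Ee) :=
          mul_le_mul_of_nonneg_right hlin (by positivity)
        nlinarith [mul_nonneg (sq_nonneg c) hE0]
  have hfin : ‖y - pj U y‖^2 ≤ (c * ‖y‖)^2 := by
    rw [hnormPy]
    have : (c * ‖y‖)^2 = c^2 * (h' - t2) := by rw [mul_pow, hynorm]
    rw [this]
    rw [hE] at key; linarith
  exact sq_le_imp (norm_nonneg _) (by positivity) hfin

lemma two_term_cs {a b p r Enn Rn c : ℝ} (ha : 0 ≤ a) (hb : 0 ≤ b) (hp : 0 ≤ p) (hr : 0 ≤ r)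
    (hE : 0 ≤ Enn) (hR : 0 ≤ Rn) (hc : 0 ≤ c)
    (hE2 : a^2 + b^2 = Enn^2) (hR2 : p^2 + r^2 = Rn^2) :
    (c*a+p)^2 + (c*b+r)^2 ≤ (c*Enn + Rn)^2 := by
  have h1 : (a*p + b*r)^2 ≤ (Enn*Rn)^2 := by nlinarith [sq_nonneg (a*r - b*p)]
  have h2 : a*p + b*r ≤ Enn * Rn :=
    sq_le_imp (by positivity) (by positivity) h1
  have h3 : c^2*(a^2+b^2) = c^2*Enn^2 := by rw [hE2]
  nlinarith [h3, hR2, mul_le_mul_of_nonneg_left h2 hc]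

lemma step_bound (U W : Submodule ℝ E) (c τ μ : ℝ) (hc0 : 0 ≤ c) (hτ : 0 < τ) (hμ : 0 < μ)
    (hstar : ∀ u ∈ U, ∀ w ∈ W, ⟪u, w⟫ ≤ c * ‖u‖ * ‖w‖)
    (e w₀ Δ : E) (hw₀ : w₀ ∈ W) (hyo : ∀ w ∈ W, ⟪e - w₀, w⟫ = 0) (hΔ : Δ ∈ W)
    (hΔn : ‖Δ‖ ≤ 2 / μ * ‖e‖)
    (hperp : ∀ f ∈ Uᗮ ⊓ Wᗮ, ⟪e, f⟫ = 0) :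
    ‖pj U (w₀ - τ • Δ) + ((e - (w₀ - τ • Δ)) - pj U (e - (w₀ - τ • Δ)))‖
      ≤ (c + 2 * τ / μ) * ‖e‖ := by
  set s : E := w₀ - τ • Δ with hs
  set y : E := e - w₀ with hy
  set Av : E := pj U s with hAv
  set Bv : E := (e - s) - pj U (e - s) with hBv
  have hAB : ⟪Av, Bv⟫ = 0 := by
    rw [real_inner_comm, hBv, hAv]
    exact pj_inner U (e - s) _ (pj_mem U s)
  have hPyth : ‖Av + Bv‖^2 = ‖Av‖^2 + ‖Bv‖^2 := by
    rw [norm_add_sq_real, hAB]; ring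
  -- bound on ‖Av‖
  have hA1 : ‖Av‖ ≤ c * ‖w₀‖ + τ * ‖pj U Δ‖ := by
    have h1 : Av = pj U w₀ - τ • pj U Δ := by
      rw [hAv, hs, pj_sub, pj_smul]
    rw [h1]
    calc ‖pj U w₀ - τ • pj U Δ‖ ≤ ‖pj U w₀‖ + ‖τ • pj U Δ‖ := norm_sub_le _ _
      _ = ‖pj U w₀‖ + τ * ‖pj U Δ‖ := by
          rw [norm_smul, Real.norm_eq_abs, abs_of_pos hτ]
      _ ≤ c * ‖w₀‖ + τ * ‖pj U Δ‖ := by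
          have := projW_bound U W c hc0 hstar w₀ hw₀
          linarith
  -- membership facts for y
  have hyW : y ∈ Wᗮ := by
    rw [Submodule.mem_orthogonal']
    exact hyo
  have hyF : ∀ f ∈ Uᗮ ⊓ Wᗮ, ⟪y, f⟫ = 0 := by
    intro f hf
    rw [hy, inner_sub_left, hperp f hf]
    have h2 : ⟪w₀, f⟫ = 0 := (Submodule.mem_inf.1 hf).2 w₀ hw₀
    rw [h2]; ring
  -- bound on ‖Bv‖
  have hB1 : ‖Bv‖ ≤ c * ‖y‖ + τ * ‖Δ - pj U Δ‖ := by
    have h1 : e - s = y + τ • Δ := by rw [hy, hs]; abel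
    have h2 : Bv = (y - pj U y) + τ • (Δ - pj U Δ) := by
      rw [hBv, h1, pj_add, pj_smul, smul_sub]; abel
    rw [h2]
    calc ‖(y - pj U y) + τ • (Δ - pj U Δ)‖
        ≤ ‖y - pj U y‖ + ‖τ • (Δ - pj U Δ)‖ := norm_add_le _ _
      _ = ‖y - pj U y‖ + τ * ‖Δ - pj U Δ‖ := by
          rw [norm_smul, Real.norm_eq_abs, abs_of_pos hτ]
      _ ≤ c * ‖y‖ + τ * ‖Δ - pj U Δ‖ := by
          have := dual_bound U W c hc0 hstar y hyW hyF
          linarith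
  -- Pythagoras splittings
  have hew : ‖w₀‖^2 + ‖y‖^2 = ‖e‖^2 := by
    have h1 : ⟪w₀, y⟫ = 0 := by
      rw [real_inner_comm]; exact hyo w₀ hw₀
    have h2 : w₀ + y = e := by rw [hy]; abel
    have h3 := norm_add_sq_real w₀ y
    rw [h1, h2] at h3
    linarith
  have hΔp : (τ * ‖pj U Δ‖)^2 + (τ * ‖Δ - pj U Δ‖)^2 = (τ * ‖Δ‖)^2 := by
    have h := pj_pyth U Δ
    have h2 : (τ * ‖pj U Δ‖)^2 + (τ * ‖Δ - pj U Δ‖)^2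
        = τ^2 * (‖pj U Δ‖^2 + ‖Δ - pj U Δ‖^2) := by ring
    rw [h2, h]; ring
  -- combine
  have hsq : ‖Av + Bv‖^2 ≤ ((c + 2 * τ / μ) * ‖e‖)^2 := by
    have hA2 : ‖Av‖^2 ≤ (c * ‖w₀‖ + τ * ‖pj U Δ‖)^2 := by
      apply sq_le_sq' _ hA1
      have : (0:ℝ) ≤ c * ‖w₀‖ + τ * ‖pj U Δ‖ := by positivity
      linarith [norm_nonneg Av]
    have hB2 : ‖Bv‖^2 ≤ (c * ‖y‖ + τ * ‖Δ - pj U Δ‖)^2 := by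
      apply sq_le_sq' _ hB1
      have : (0:ℝ) ≤ c * ‖y‖ + τ * ‖Δ - pj U Δ‖ := by positivity
      linarith [norm_nonneg Bv]
    have hcs := two_term_cs (norm_nonneg w₀) (norm_nonneg y)
      (by positivity : (0:ℝ) ≤ τ * ‖pj U Δ‖) (by positivity : (0:ℝ) ≤ τ * ‖Δ - pj U Δ‖)
      (norm_nonneg e) (by positivity : (0:ℝ) ≤ τ * ‖Δ‖) hc0 hew hΔp
    have hfin : (c * ‖e‖ + τ * ‖Δ‖)^2 ≤ ((c + 2 * τ / μ) * ‖e‖)^2 := by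
      have h1 : τ * ‖Δ‖ ≤ 2 * τ / μ * ‖e‖ := by
        calc τ * ‖Δ‖ ≤ τ * (2 / μ * ‖e‖) := by
              apply mul_le_mul_of_nonneg_left hΔn (le_of_lt hτ)
          _ = 2 * τ / μ * ‖e‖ := by ring
      have h2 : c * ‖e‖ + τ * ‖Δ‖ ≤ (c + 2 * τ / μ) * ‖e‖ := by
        rw [add_mul]; linarith
      apply sq_le_sq' _ h2
      have : (0:ℝ) ≤ c * ‖e‖ + τ * ‖Δ‖ := by positivity
      linarith
    rw [hPyth]
    calc ‖Av‖^2 + ‖Bv‖^2 ≤ (c * ‖w₀‖ + τ * ‖pj U Δ‖)^2 + (c * ‖y‖ + τ * ‖Δ - pj U Δ‖)^2 := by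
          linarith
      _ ≤ (c * ‖e‖ + τ * ‖Δ‖)^2 := hcs
      _ ≤ ((c + 2 * τ / μ) * ‖e‖)^2 := hfin
  exact sq_le_imp (norm_nonneg _) (by positivity) hsq
end Aux

/-- Local linear rate of Douglas–Rachford splitting (≡ ADMM) for isotropic
TV compressed sensing: if the iterates converge to an interior fixed point
`q_* = v_* + τη` (with `η` a dual certificate), then eventually
`‖q_k − q_*‖ ≤ (c + 2τ/μ)^{k−K} ‖q_K − q_*‖`. -/
theorem tv_cs_drs_local_linear_rate
    {N d : ℕ} (hN : 0 < N) (hd : 0 < d)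
    {X Z : Type*} [NormedAddCommGroup X] [InnerProductSpace ℝ X] [FiniteDimensional ℝ X]
    [NormedAddCommGroup Z] [InnerProductSpace ℝ Z] [FiniteDimensional ℝ Z]
    (K : X →ₗ[ℝ] Vsp N d) (A : X →ₗ[ℝ] Z) (b : Z) (hb : ∃ u, A u = b)
    -- `P` is the metric projection onto the affine set `V_b = {K u : A u = b}`
    (P : Vsp N d → Vsp N d)
    (hP : ∀ q : Vsp N d, (∃ u, A u = b ∧ K u = P q) ∧
      ∀ v, (∃ u, A u = b ∧ K u = v) → ‖q - P q‖ ≤ ‖q - v‖)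
    (τ : ℝ) (hτ : 0 < τ)
    (vstar : Vsp N d)
    -- the support `S = {j : (v_*)_j ≠ 0}` is nonempty
    (hS : ∃ j, vstar j ≠ 0)
    -- `v_* ∈ V_b`
    (hvb : ∃ u, A u = b ∧ K u = vstar)
    (η : Vsp N d)
    (hη1 : ∀ j, vstar j ≠ 0 → η j = ‖vstar j‖⁻¹ • vstar j)
    (hη2 : ∀ j, vstar j = 0 → ‖η j‖ < 1)
    -- `η` is orthogonal to `U = K(ker A)`
    (hη3 : ∀ u ∈ (LinearMap.ker A).map K, ⟪η, u⟫ = 0)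
    (qstar : Vsp N d) (hqstar : qstar = vstar + τ • η)
    -- `μ = min_{j ∈ S} ‖(v_*)_j‖`
    (μ : ℝ) (hμ : IsLeast ((fun j => ‖vstar j‖) '' {j | vstar j ≠ 0}) μ)
    -- `c = sup{⟨u, w⟩ : u ∈ U, w ∈ W, ‖u‖ = ‖w‖ = 1}` (with `sSup ∅ = 0` in ℝ)
    (c : ℝ)
    (hc : c = sSup {r : ℝ | ∃ u ∈ (LinearMap.ker A).map K,
        ∃ w ∈ vanishingOn (d := d) {j | vstar j = 0},
        ‖u‖ = 1 ∧ ‖w‖ = 1 ∧ r = ⟪u, w⟫})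
    (q : ℕ → Vsp N d)
    -- `q_{k+1} = H_τ(q_k)` where `H_τ(q) = P(2 S_τ(q) − q) + q − S_τ(q)`
    (hrec : ∀ k, q (k + 1) =
      P ((2 : ℝ) • shrink τ (q k) - q k) + q k - shrink τ (q k))
    (hlim : Filter.Tendsto q Filter.atTop (nhds qstar)) :
    ∃ K₀ : ℕ, ∀ k, K₀ ≤ k →
      ‖q k - qstar‖ ≤ (c + 2 * τ / μ) ^ (k - K₀) * ‖q K₀ - qstar‖ := by
  
  classical
  -- basic setup
  set Usub : Submodule ℝ (Vsp N d) := (LinearMap.ker A).map K with hUsub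
  set Wsub : Submodule ℝ (Vsp N d) := vanishingOn (d := d) {j | vstar j = 0} with hWsub
  have mem_W : ∀ z : Vsp N d, z ∈ Wsub ↔ ∀ j, vstar j = 0 → z j = 0 := by
    intro z; constructor
    · intro h j hj; exact h j hj
    · intro h j hj; exact h j hj
  -- μ is positive
  obtain ⟨⟨jμ, hjμ, hμval⟩, hμlb⟩ := hμ
  have hμpos : 0 < μ := by
    rw [← hμval]; exact norm_pos_iff.2 hjμ
  have hμle : ∀ j, vstar j ≠ 0 → μ ≤ ‖vstar j‖ := by
    intro j hj; exact hμlb ⟨j, hj, rfl⟩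
  -- c is nonnegative and satisfies the angle inequality
  set Sset : Set ℝ := {r : ℝ | ∃ u ∈ Usub, ∃ w ∈ Wsub, ‖u‖ = 1 ∧ ‖w‖ = 1 ∧ r = ⟪u, w⟫}
    with hSset
  have hbdd : ∀ r ∈ Sset, r ≤ 1 := by
    rintro r ⟨u, hu, w, hw, hu1, hw1, rfl⟩
    calc ⟪u, w⟫ ≤ ‖u‖ * ‖w‖ := real_inner_le_norm u w
      _ = 1 := by rw [hu1, hw1]; ring
  have hbddA : BddAbove Sset := ⟨1, hbdd⟩
  have hc0 : 0 ≤ c := by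
    rcases Set.eq_empty_or_nonempty Sset with hemp | ⟨r, hr⟩
    · rw [hc, hemp, Real.sSup_empty]
    · obtain ⟨u, hu, w, hw, hu1, hw1, rfl⟩ := hr
      have h1 : ⟪u, w⟫ ≤ c := by rw [hc]; exact le_csSup hbddA ⟨u, hu, w, hw, hu1, hw1, rfl⟩
      have h2 : -⟪u, w⟫ ≤ c := by
        rw [hc]
        apply le_csSup hbddA
        refine ⟨-u, Submodule.neg_mem _ hu, w, hw, by rw [norm_neg]; exact hu1, hw1, ?_⟩
        rw [inner_neg_left]
      linarith
  have hstar : ∀ u ∈ Usub, ∀ w ∈ Wsub, ⟪u, w⟫ ≤ c * ‖u‖ * ‖w‖ := by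
    intro u hu w hw
    rcases eq_or_ne u 0 with rfl | hu0
    · rw [inner_zero_left, norm_zero]; positivity
    rcases eq_or_ne w 0 with rfl | hw0
    · rw [inner_zero_right, norm_zero]; positivity
    have hun : (0:ℝ) < ‖u‖ := norm_pos_iff.2 hu0
    have hwn : (0:ℝ) < ‖w‖ := norm_pos_iff.2 hw0
    have hmem : ⟪‖u‖⁻¹ • u, ‖w‖⁻¹ • w⟫ ∈ Sset := by
      refine ⟨‖u‖⁻¹ • u, Submodule.smul_mem _ _ hu, ‖w‖⁻¹ • w, Submodule.smul_mem _ _ hw, ?_, ?_, rfl⟩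
      · rw [norm_smul, norm_inv, norm_norm, inv_mul_cancel₀ hun.ne']
      · rw [norm_smul, norm_inv, norm_norm, inv_mul_cancel₀ hwn.ne']
    have h1 : ⟪‖u‖⁻¹ • u, ‖w‖⁻¹ • w⟫ ≤ c := by rw [hc]; exact le_csSup hbddA hmem
    rw [real_inner_smul_left, real_inner_smul_right] at h1
    have h2 : ⟪u, w⟫ = ‖u‖ * ‖w‖ * (‖u‖⁻¹ * (‖w‖⁻¹ * ⟪u, w⟫)) := by
      field_simp
    rw [h2]
    calc ‖u‖ * ‖w‖ * (‖u‖⁻¹ * (‖w‖⁻¹ * ⟪u, w⟫)) ≤ ‖u‖ * ‖w‖ * c := by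
          apply mul_le_mul_of_nonneg_left h1 (by positivity)
      _ = c * ‖u‖ * ‖w‖ := by ring
  -- the projection formula
  have hPform : ∀ qq : Vsp N d, P qq = vstar + pj Usub (qq - vstar) := by
    intro qq
    obtain ⟨⟨u₀, hu₀A, hu₀K⟩, hmin⟩ := hP qq
    obtain ⟨u₁, hu₁A, hu₁K⟩ := hvb
    have hmem : P qq - vstar ∈ Usub := by
      rw [← hu₀K, ← hu₁K, ← map_sub]
      exact Submodule.mem_map_of_mem (show u₀ - u₁ ∈ LinearMap.ker A by
        rw [LinearMap.mem_ker, map_sub, hu₀A, hu₁A, sub_self])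
    have horth : ∀ w ∈ Usub, ⟪qq - P qq, w⟫ = 0 := by
      intro w hw
      obtain ⟨u', hu', rfl⟩ := hw
      rcases eq_or_ne (K u') 0 with hz | hz
      · rw [hz, inner_zero_right]
      have hineq : ∀ t : ℝ, ‖qq - P qq‖ ≤ ‖qq - (P qq + t • K u')‖ := by
        intro t
        apply hmin
        exact ⟨u₀ + t • u', by
          rw [map_add, hu₀A, map_smul, LinearMap.mem_ker.1 hu', smul_zero, add_zero], by
          rw [map_add, hu₀K, map_smul]⟩
      set g : ℝ := ⟪qq - P qq, K u'⟫ with hg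
      have hkn : (0:ℝ) < ‖K u'‖ := norm_pos_iff.2 hz
      have key : ∀ t : ℝ, 0 ≤ -2*t*g + t^2*‖K u'‖^2 := by
        intro t
        have h1 := hineq t
        have h2 : qq - (P qq + t • K u') = (qq - P qq) - t • K u' := by abel
        have h3 := norm_sub_sq_real (qq - P qq) (t • K u')
        rw [← h2] at h3
        have h4 : ⟪qq - P qq, t • K u'⟫ = t * g := real_inner_smul_right _ _ _
        have h5 : ‖t • K u'‖^2 = t^2 * ‖K u'‖^2 := by
          rw [norm_smul, Real.norm_eq_abs, mul_pow, sq_abs]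
        rw [h4, h5] at h3
        have h6 : ‖qq - P qq‖^2 ≤ ‖qq - (P qq + t • K u')‖^2 := by
          apply sq_le_sq' _ h1
          linarith [norm_nonneg (qq - (P qq + t • K u')), norm_nonneg (qq - P qq)]
        rw [h3] at h6
        linarith
      have hthis := key (g / ‖K u'‖^2)
      have h8 : (0:ℝ) < ‖K u'‖^2 := by positivity
      have h7 : -2*(g/‖K u'‖^2)*g + (g/‖K u'‖^2)^2*‖K u'‖^2 = -(g^2/‖K u'‖^2) := by
        field_simp; ring
      rw [h7] at hthis
      have h10 := mul_le_mul_of_nonneg_right (neg_nonneg.1 hthis) (le_of_lt h8)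
      rw [div_mul_cancel₀ _ h8.ne'] at h10
      have h9 : g^2 ≤ 0 := by nlinarith [h10]
      have : g = 0 := by nlinarith [sq_nonneg g]
      exact this
    have hUperp : qq - P qq ∈ Usubᗮ := by
      rw [Submodule.mem_orthogonal']; exact horth
    have h1 : pj Usub (qq - vstar) = pj Usub (qq - P qq) + pj Usub (P qq - vstar) := by
      rw [← pj_add]; congr 1; abel
    rw [h1, pj_of_orth Usub _ hUperp, pj_of_mem Usub _ hmem, zero_add]
    abel
  -- η is orthogonal to U
  have hηU : pj Usub η = 0 := by
    apply pj_of_orth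
    rw [Submodule.mem_orthogonal']
    exact hη3
  -- blockwise norm facts
  have blocknorm : ∀ (x : Vsp N d) (j : Fin N), ‖x j‖ ≤ ‖x‖ := by
    intro x j
    have h1 : ‖x‖^2 = ∑ i, ‖x i‖^2 := PiLp.norm_sq_eq_of_L2 _ x
    have h2 : ‖x j‖^2 ≤ ∑ i, ‖x i‖^2 :=
      Finset.single_le_sum (f := fun i => ‖x i‖^2) (fun i _ => sq_nonneg _) (Finset.mem_univ j)
    rw [← h1] at h2
    exact sq_le_imp (norm_nonneg _) (norm_nonneg _) h2
  haveI : Nonempty (Fin N) := ⟨⟨0, hN⟩⟩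
  -- qstar blockwise
  have happ : ∀ j, qstar j = vstar j + τ • η j := by
    intro j; rw [hqstar]; rfl
  have hqsS : ∀ j, vstar j ≠ 0 → qstar j = (1 + τ / ‖vstar j‖) • vstar j := by
    intro j hj
    rw [happ j, hη1 j hj, smul_smul, add_smul, one_smul, div_eq_mul_inv]
  have hqsSnorm : ∀ j, vstar j ≠ 0 → ‖qstar j‖ = ‖vstar j‖ + τ := by
    intro j hj
    have hv : (0:ℝ) < ‖vstar j‖ := norm_pos_iff.2 hj
    rw [hqsS j hj, norm_smul, Real.norm_eq_abs, abs_of_pos (by positivity)]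
    field_simp
  have hqsZ : ∀ j, vstar j = 0 → ‖qstar j‖ = τ * ‖η j‖ := by
    intro j hj
    rw [happ j, hj, zero_add, norm_smul, Real.norm_eq_abs, abs_of_pos hτ]
  -- epsilon
  set ε : ℝ := (Finset.univ.inf' Finset.univ_nonempty
      (fun j : Fin N => if vstar j = 0 then τ * (1 - ‖η j‖) else ‖vstar j‖)) / 2 with hεdef
  have hεpos : 0 < ε := by
    apply div_pos _ two_pos
    rw [Finset.lt_inf'_iff]
    intro j _
    by_cases hj : vstar j = 0
    · rw [if_pos hj]; have := hη2 j hj; nlinarith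
    · rw [if_neg hj]; exact norm_pos_iff.2 hj
  have hεle : ∀ j : Fin N,
      ε ≤ (if vstar j = 0 then τ * (1 - ‖η j‖) else ‖vstar j‖) / 2 := by
    intro j
    rw [hεdef]
    have := Finset.inf'_le (b := j)
      (fun j : Fin N => if vstar j = 0 then τ * (1 - ‖η j‖) else ‖vstar j‖)
      (Finset.mem_univ j)
    linarith
  -- neighborhood facts
  have hnb0 : ∀ qq : Vsp N d, ‖qq - qstar‖ ≤ ε → ∀ j, vstar j = 0 → ‖qq j‖ ≤ τ := by
    intro qq hq j hj
    have h1 : ‖qq j - qstar j‖ ≤ ε :=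
      le_trans (by simpa using blocknorm (qq - qstar) j) hq
    have h2 : ‖qq j‖ ≤ ‖qstar j‖ + ‖qq j - qstar j‖ := by
      have := norm_add_le (qstar j) (qq j - qstar j)
      have h3 : qstar j + (qq j - qstar j) = qq j := by abel
      rw [h3] at this; exact this
    have h4 := hεle j
    rw [if_pos hj] at h4
    have h5 := hqsZ j hj
    have h6 := hη2 j hj
    have h7 : (0:ℝ) ≤ ‖η j‖ := norm_nonneg _
    nlinarith
  have hnbS : ∀ qq : Vsp N d, ‖qq - qstar‖ ≤ ε → ∀ j, vstar j ≠ 0 → τ < ‖qq j‖ := by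
    intro qq hq j hj
    have h1 : ‖qq j - qstar j‖ ≤ ε :=
      le_trans (by simpa using blocknorm (qq - qstar) j) hq
    have h2 : ‖qstar j‖ - ‖qq j‖ ≤ ‖qq j - qstar j‖ := by
      rw [norm_sub_rev]
      have := norm_sub_norm_le (qstar j) (qq j)
      exact this
    have h4 := hεle j
    rw [if_neg hj] at h4
    have h5 := hqsSnorm j hj
    have hv : (0:ℝ) < ‖vstar j‖ := norm_pos_iff.2 hj
    nlinarith
  -- per-step decomposition
  have hkey : ∀ k : ℕ, ‖q k - qstar‖ ≤ ε → ∃ w₀ Δ : Vsp N d, w₀ ∈ Wsub ∧ Δ ∈ Wsub ∧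
      (∀ w ∈ Wsub, ⟪(q k - qstar) - w₀, w⟫ = 0) ∧ ‖Δ‖ ≤ 2/μ * ‖q k - qstar‖ ∧
      q (k+1) - qstar = pj Usub (w₀ - τ • Δ) +
        (((q k - qstar) - (w₀ - τ • Δ)) - pj Usub ((q k - qstar) - (w₀ - τ • Δ))) := by
    intro k hk
    set e : Vsp N d := q k - qstar with he
    set w₀ : Vsp N d := WithLp.toLp 2 (fun j => if vstar j = 0 then 0 else e j) with hw₀def
    set Δ : Vsp N d := WithLp.toLp 2 (fun j => if vstar j = 0 then 0
      else ‖q k j‖⁻¹ • q k j - ‖qstar j‖⁻¹ • qstar j) with hΔdef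
    have hw₀W : w₀ ∈ Wsub := by
      rw [mem_W]; intro j hj; simp [hw₀def, hj]
    have hΔW : Δ ∈ Wsub := by
      rw [mem_W]; intro j hj; simp [hΔdef, hj]
    have horth : ∀ w ∈ Wsub, ⟪e - w₀, w⟫ = 0 := by
      intro w hw
      rw [PiLp.inner_apply]
      apply Finset.sum_eq_zero
      intro j _
      by_cases hj : vstar j = 0
      · have : w j = 0 := (mem_W w).1 hw j hj
        rw [this, inner_zero_right]
      · have : (e - w₀) j = 0 := by simp [hw₀def, hj]
        rw [this, inner_zero_left]
    have hqjne : ∀ j, vstar j ≠ 0 → q k j ≠ 0 := by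
      intro j hj hzz
      have := hnbS (q k) hk j hj
      rw [hzz, norm_zero] at this
      linarith
    have hqsjne : ∀ j, vstar j ≠ 0 → qstar j ≠ 0 := by
      intro j hj
      rw [← norm_pos_iff, hqsSnorm j hj]
      have : (0:ℝ) < ‖vstar j‖ := norm_pos_iff.2 hj
      linarith
    have hblock : ∀ j, ‖Δ j‖ ≤ 2/μ * ‖e j‖ := by
      intro j
      by_cases hj : vstar j = 0
      · have h0 : Δ j = 0 := by simp [hΔdef, hj]
        rw [h0, norm_zero]; positivity
      · have h1 := nrm_lip (qstar j) (q k j) (hqsjne j hj) (hqjne j hj)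
        have h2 : ‖Δ j‖ = ‖‖qstar j‖⁻¹ • qstar j - ‖q k j‖⁻¹ • q k j‖ := by
          have : Δ j = ‖q k j‖⁻¹ • q k j - ‖qstar j‖⁻¹ • qstar j := by simp [hΔdef, hj]
          rw [this, norm_sub_rev]
        have h3 : ‖qstar j - q k j‖ = ‖e j‖ := by
          have hej : e j = q k j - qstar j := rfl
          rw [hej, norm_sub_rev]
        rw [h2]
        rw [h3] at h1
        have hv : (0:ℝ) < ‖vstar j‖ := norm_pos_iff.2 hj
        have hqs := hqsSnorm j hj
        have hμv := hμle j hj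
        calc ‖‖qstar j‖⁻¹ • qstar j - ‖q k j‖⁻¹ • q k j‖ ≤ 2 * ‖e j‖ / ‖qstar j‖ := h1
          _ ≤ 2 * ‖e j‖ / μ := by
              apply div_le_div_of_nonneg_left (by positivity) hμpos
              rw [hqs]; linarith
          _ = 2/μ * ‖e j‖ := by ring
    have hΔn : ‖Δ‖ ≤ 2/μ * ‖e‖ := by
      have h1 : ‖Δ‖^2 ≤ (2/μ)^2 * ‖e‖^2 := by
        rw [PiLp.norm_sq_eq_of_L2 _ Δ, PiLp.norm_sq_eq_of_L2 _ e]
        calc ∑ j, ‖Δ j‖^2 ≤ ∑ j, (2/μ * ‖e j‖)^2 := by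
              apply Finset.sum_le_sum
              intro j _
              exact pow_le_pow_left₀ (norm_nonneg _) (hblock j) 2
          _ = (2/μ)^2 * ∑ j, ‖e j‖^2 := by
              rw [Finset.mul_sum]
              apply Finset.sum_congr rfl
              intro j _; ring
      exact sq_le_imp (norm_nonneg _) (by positivity) (by
        calc ‖Δ‖^2 ≤ (2/μ)^2 * ‖e‖^2 := h1
          _ = (2/μ * ‖e‖)^2 := by ring)
    -- shrink linearization
    have hsh : shrink τ (q k) - vstar = w₀ - τ • Δ := by
      refine PiLp.ext (fun j => ?_)
      show shrink τ (q k) j - vstar j = w₀ j - τ • Δ j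
      by_cases hj : vstar j = 0
      · have h1 : shrink τ (q k) j = 0 := by
          simp [shrink, hnb0 (q k) hk j hj]
        have h2 : w₀ j = 0 := by simp [hw₀def, hj]
        have h3 : Δ j = 0 := by simp [hΔdef, hj]
        simp [h1, h2, h3, hj]
      · have hlt := hnbS (q k) hk j hj
        have h1 : shrink τ (q k) j = q k j - (τ / ‖q k j‖) • q k j := by
          simp [shrink, not_le.2 hlt]
        have h2 : w₀ j = e j := by simp [hw₀def, hj]
        have h3 : Δ j = ‖q k j‖⁻¹ • q k j - ‖qstar j‖⁻¹ • qstar j := by simp [hΔdef, hj]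
        have hv : (0:ℝ) < ‖vstar j‖ := norm_pos_iff.2 hj
        have hqs := hqsS j hj
        have hqn := hqsSnorm j hj
        have hkey2 : (τ * ‖qstar j‖⁻¹) • qstar j = (τ * ‖vstar j‖⁻¹) • vstar j := by
          rw [hqn, hqs, smul_smul]
          congr 1
          field_simp
        have hkey3 : qstar j - (τ * ‖qstar j‖⁻¹) • qstar j = vstar j := by
          rw [hkey2, hqs]
          have hco : (1 + τ/‖vstar j‖) - τ * ‖vstar j‖⁻¹ = 1 := by field_simp; ring
          rw [← sub_smul, hco, one_smul]
        have hej : e j = q k j - qstar j := rfl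
        have hvs : vstar j = qstar j - (τ * ‖qstar j‖⁻¹) • qstar j := hkey3.symm
        rw [h1, h2, h3, hej, hvs, div_eq_mul_inv, smul_sub, smul_smul, smul_smul]
        module
    have hiter : q (k+1) - qstar = pj Usub (w₀ - τ • Δ) +
        ((e - (w₀ - τ • Δ)) - pj Usub (e - (w₀ - τ • Δ))) := by
      have hshr : shrink τ (q k) = vstar + (w₀ - τ • Δ) := by
        have h9 := hsh
        rw [sub_eq_iff_eq_add] at h9
        rw [h9]; abel
      have harg : (2:ℝ) • shrink τ (q k) - q k - vstar
          = (2:ℝ) • (w₀ - τ • Δ) - e - τ • η := by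
        rw [hshr, he, hqstar]
        module
      have hP1 : P ((2:ℝ) • shrink τ (q k) - q k) =
          vstar + pj Usub ((2:ℝ) • (w₀ - τ • Δ) - e - τ • η) := by
        rw [hPform, ← harg]
      have hpj1 : pj Usub ((2:ℝ) • (w₀ - τ • Δ) - e - τ • η)
          = (2:ℝ) • (pj Usub w₀ - pj Usub (τ • Δ)) - pj Usub e := by
        rw [pj_sub, pj_sub, pj_smul, pj_smul, hηU, smul_zero, sub_zero, pj_sub]
      have hqk : q k = qstar + e := by rw [he]; abel
      have hpj2 : pj Usub (e - (w₀ - τ • Δ))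
          = pj Usub e - (pj Usub w₀ - pj Usub (τ • Δ)) := by
        simp only [pj_sub]
      have hpj3 : pj Usub (w₀ - τ • Δ) = pj Usub w₀ - pj Usub (τ • Δ) := by
        rw [pj_sub]
      rw [hrec k, hP1, hpj1, hpj2, hpj3, hshr, hqk]
      module
    exact ⟨w₀, Δ, hw₀W, hΔW, horth, hΔn, hiter⟩
  set ρ : ℝ := c + 2 * τ / μ with hρdef
  have hρ0 : 0 ≤ ρ := by rw [hρdef]; positivity
  obtain ⟨K₀, hK₀⟩ := (Metric.tendsto_atTop.1 hlim) ε hεpos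
  have hKnorm : ∀ k, K₀ ≤ k → ‖q k - qstar‖ ≤ ε := by
    intro k hk
    have := hK₀ k hk
    rw [dist_eq_norm] at this
    exact le_of_lt this
  have hperp : ∀ k, K₀ ≤ k → ∀ f ∈ Usubᗮ ⊓ Wsubᗮ, ⟪q k - qstar, f⟫ = 0 := by
    intro k hk f hf
    have hfU : f ∈ Usubᗮ := (Submodule.mem_inf.1 hf).1
    have hfW : f ∈ Wsubᗮ := (Submodule.mem_inf.1 hf).2
    have hstepinv : ∀ m, K₀ ≤ m → ⟪q (m+1) - qstar, f⟫ = ⟪q m - qstar, f⟫ := by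
      intro m hm
      obtain ⟨w₀, Δ, hw₀W, hΔW, horth, hΔn, hiter⟩ := hkey m (hKnorm m hm)
      rw [hiter, inner_add_left, inner_sub_left, inner_sub_left]
      have h1 : ⟪pj Usub (w₀ - τ • Δ), f⟫ = 0 := hfU _ (pj_mem _ _)
      have h2 : ⟪pj Usub ((q m - qstar) - (w₀ - τ • Δ)), f⟫ = 0 := hfU _ (pj_mem _ _)
      have h3 : ⟪w₀ - τ • Δ, f⟫ = 0 :=
        hfW _ (Submodule.sub_mem _ hw₀W (Submodule.smul_mem _ _ hΔW))
      rw [h1, h2, h3]; ring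
    have hconst : ∀ m, K₀ ≤ m → ⟪q m - qstar, f⟫ = ⟪q K₀ - qstar, f⟫ := by
      intro m hm
      induction m, hm using Nat.le_induction with
      | base => rfl
      | succ n hn ih => rw [hstepinv n hn, ih]
    have hten : Filter.Tendsto (fun m => ⟪q m - qstar, f⟫) Filter.atTop (nhds 0) := by
      have h4 : Filter.Tendsto (fun m => q m - qstar) Filter.atTop (nhds (0 : Vsp N d)) := by
        have := hlim.sub (tendsto_const_nhds (x := qstar))
        simpa using this
      have h5 : Filter.Tendsto (fun m => ⟪q m - qstar, f⟫) Filter.atTop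
          (nhds ⟪(0 : Vsp N d), f⟫) :=
        h4.inner (tendsto_const_nhds (x := f))
      rw [inner_zero_left] at h5
      exact h5
    have hzero : ⟪q K₀ - qstar, f⟫ = 0 := by
      have h5 : Filter.Tendsto (fun _ : ℕ => ⟪q K₀ - qstar, f⟫) Filter.atTop
          (nhds (0 : ℝ)) := by
        apply hten.congr'
        filter_upwards [Filter.eventually_atTop.2 ⟨K₀, fun m hm => hconst m hm⟩] with m hm
        exact hm
      exact tendsto_nhds_unique tendsto_const_nhds h5
    rw [hconst k hk, hzero]
  refine ⟨K₀, ?_⟩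
  intro k hk
  induction k, hk using Nat.le_induction with
  | base => simp
  | succ n hn ih =>
    obtain ⟨w₀, Δ, hw₀W, hΔW, horth, hΔn, hiter⟩ := hkey n (hKnorm n hn)
    have hstep : ‖q (n+1) - qstar‖ ≤ ρ * ‖q n - qstar‖ := by
      rw [hiter]
      exact step_bound Usub Wsub c τ μ hc0 hτ hμpos hstar (q n - qstar) w₀ Δ
        hw₀W horth hΔW hΔn (hperp n hn)
    calc ‖q (n+1) - qstar‖ ≤ ρ * ‖q n - qstar‖ := hstep
      _ ≤ ρ * (ρ ^ (n - K₀) * ‖q K₀ - qstar‖) := mul_le_mul_of_nonneg_left ih hρ0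
      _ = ρ ^ ((n+1) - K₀) * ‖q K₀ - qstar‖ := by rw [Nat.succ_sub hn, pow_succ]; ring
end
end

section
/- Assume v_* ∈ V_b and v_* is the unique minimizer of the isotropic (1,2)-norm f over V_b (i.e., f(v_*) < f(v) for every v ∈ V_b with v ≠ v_*). Then for τ > 0, a point q ∈ V satisfies H_τ(q) = q if and only if there exists η ∈ V such that q = v_* + τη, η is orthogonal to U = K(ker A), and f(w) ≥ f(v_*) + ⟨η, w − v_*⟩ for all w ∈ V (i.e., η is a subgradient of f at v_*). -/
open scoped RealInnerProductSpace
open scoped Classical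

noncomputable section

section aux
variable {N d : ℕ}

lemma sum_subgrad {η s : Vsp N d} (h1 : ∀ j, ‖η j‖ ≤ 1)
    (h2 : ∀ j, ⟪η j, s j⟫ = ‖s j‖) (w : Vsp N d) :
    (∑ j, ‖w j‖) ≥ (∑ j, ‖s j‖) + ⟪η, w - s⟫ := by
  rw [PiLp.inner_apply]
  have key : ∀ j : Fin N, ⟪η j, (w - s) j⟫ ≤ ‖w j‖ - ‖s j‖ := by
    intro j
    have hcs : ⟪η j, w j⟫ ≤ ‖η j‖ * ‖w j‖ := real_inner_le_norm _ _
    have : ‖η j‖ * ‖w j‖ ≤ ‖w j‖ := by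
      nlinarith [norm_nonneg (w j), h1 j]
    rw [PiLp.sub_apply, inner_sub_right, h2 j]
    linarith
  have hsum : (∑ j, ⟪η j, (w - s) j⟫) ≤ ∑ j, (‖w j‖ - ‖s j‖) :=
    Finset.sum_le_sum (fun j _ => key j)
  rw [Finset.sum_sub_distrib] at hsum
  linarith

lemma shrink_cert {τ : ℝ} (hτ : 0 < τ) (q : Vsp N d) (j : Fin N) :
    ‖τ⁻¹ • (q j - shrink τ q j)‖ ≤ 1 ∧
      ⟪τ⁻¹ • (q j - shrink τ q j), shrink τ q j⟫ = ‖shrink τ q j‖ := by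
  by_cases hle : ‖q j‖ ≤ τ
  · have hs : shrink τ q j = 0 := by simp [shrink, hle]
    rw [hs]
    constructor
    · rw [sub_zero, norm_smul, Real.norm_eq_abs, abs_of_pos (inv_pos.mpr hτ)]
      rw [← div_eq_inv_mul, div_le_one hτ]
      exact hle
    · simp
  · push_neg at hle
    have hq0 : ‖q j‖ > 0 := lt_trans hτ hle
    have hs : shrink τ q j = (1 - τ / ‖q j‖) • q j := by
      simp [shrink, not_le.mpr hle, sub_smul, one_smul]
    have hc : 0 < 1 - τ / ‖q j‖ := by
      rw [sub_pos, div_lt_one hq0]; exact hle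
    have hdiff : q j - shrink τ q j = (τ / ‖q j‖) • q j := by
      rw [hs, sub_smul, one_smul]; abel
    constructor
    · rw [hdiff, smul_smul, norm_smul, Real.norm_eq_abs]
      have : τ⁻¹ * (τ / ‖q j‖) = ‖q j‖⁻¹ := by field_simp
      rw [this, abs_of_pos (inv_pos.mpr hq0), inv_mul_cancel₀ hq0.ne']
    · rw [hdiff, hs, smul_smul]
      have h1 : τ⁻¹ * (τ / ‖q j‖) = ‖q j‖⁻¹ := by field_simp
      rw [h1, real_inner_smul_left, real_inner_smul_right,
        real_inner_self_eq_norm_sq, norm_smul, Real.norm_eq_abs, abs_of_pos hc]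
      field_simp

lemma inner_single {N d : ℕ} (η : Vsp N d) {w vstar : Vsp N d} (j : Fin N)
    (hwo : ∀ i, i ≠ j → w i = vstar i) :
    ⟪η, w - vstar⟫ = ⟪η j, w j - vstar j⟫ := by
  rw [PiLp.inner_apply, Finset.sum_eq_single j]
  · simp [PiLp.sub_apply]
  · intro i _ hij
    simp [PiLp.sub_apply, hwo i hij]
  · simp

lemma sum_norm_single {N d : ℕ} {w vstar : Vsp N d} (j : Fin N)
    (hwo : ∀ i, i ≠ j → w i = vstar i) :
    (∑ i, ‖w i‖) = (∑ i, ‖vstar i‖) - ‖vstar j‖ + ‖w j‖ := by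
  have h : (∑ i, (‖w i‖ - ‖vstar i‖)) = ‖w j‖ - ‖vstar j‖ := by
    rw [Finset.sum_eq_single j]
    · intro i _ hij
      rw [hwo i hij, sub_self]
    · simp
  rw [Finset.sum_sub_distrib] at h
  linarith

lemma eta_block_norm {N d : ℕ} {vstar η : Vsp N d}
    (hsub : ∀ w : Vsp N d, (∑ j, ‖w j‖) ≥ (∑ j, ‖vstar j‖) + ⟪η, w - vstar⟫)
    (j : Fin N) : ‖η j‖ ≤ 1 := by
  set w : Vsp N d := WithLp.toLp 2 (fun i => if i = j then vstar j + η j else vstar i) with hwdef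
  have hwo : ∀ i, i ≠ j → w i = vstar i := by
    intro i hij; simp [hwdef, hij]
  have hwj : w j = vstar j + η j := by simp [hwdef]
  have hw := hsub w
  rw [sum_norm_single j hwo, inner_single η j hwo, hwj, add_sub_cancel_left,
    real_inner_self_eq_norm_sq] at hw
  have htri : ‖vstar j + η j‖ ≤ ‖vstar j‖ + ‖η j‖ := norm_add_le _ _
  nlinarith [norm_nonneg (η j)]

lemma eta_block_eq {N d : ℕ} {vstar η : Vsp N d}
    (hsub : ∀ w : Vsp N d, (∑ j, ‖w j‖) ≥ (∑ j, ‖vstar j‖) + ⟪η, w - vstar⟫)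
    (j : Fin N) (hne : vstar j ≠ 0) : η j = ‖vstar j‖⁻¹ • vstar j := by
  have hn : 0 < ‖vstar j‖ := norm_pos_iff.mpr hne
  set w : Vsp N d := WithLp.toLp 2 (fun i => if i = j then 0 else vstar i) with hwdef
  have hwo : ∀ i, i ≠ j → w i = vstar i := by
    intro i hij; simp [hwdef, hij]
  have hwj : w j = 0 := by simp [hwdef]
  have hw := hsub w
  rw [sum_norm_single j hwo, inner_single η j hwo, hwj, zero_sub, inner_neg_right,
    norm_zero] at hw
  have hge : ⟪η j, vstar j⟫ ≥ ‖vstar j‖ := by linarith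
  have hcs : ⟪η j, vstar j⟫ ≤ ‖η j‖ * ‖vstar j‖ := real_inner_le_norm _ _
  have h1 : ‖η j‖ ≤ 1 := eta_block_norm hsub j
  have hnorm1 : ‖η j‖ = 1 := by nlinarith
  have heq : ⟪η j, vstar j⟫ = ‖vstar j‖ := by nlinarith
  have hzero : ‖η j - ‖vstar j‖⁻¹ • vstar j‖ ^ 2 = 0 := by
    rw [norm_sub_sq_real, real_inner_smul_right, heq, norm_smul, Real.norm_eq_abs,
      abs_of_pos (inv_pos.mpr hn), hnorm1]
    field_simp
    norm_num
  have hz2 : ‖η j - ‖vstar j‖⁻¹ • vstar j‖ = 0 := by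
    nlinarith [norm_nonneg (η j - ‖vstar j‖⁻¹ • vstar j)]
  exact sub_eq_zero.mp (norm_eq_zero.mp hz2)

lemma shrink_eq {τ : ℝ} (hτ : 0 < τ) {vstar η : Vsp N d}
    (h1 : ∀ j, ‖η j‖ ≤ 1)
    (h2 : ∀ j, vstar j ≠ 0 → η j = ‖vstar j‖⁻¹ • vstar j) :
    shrink τ (vstar + τ • η) = vstar := by
  apply PiLp.ext; intro j
  have happ : (vstar + τ • η) j = vstar j + τ • η j := by
    simp [PiLp.add_apply, PiLp.smul_apply]
  by_cases hv : vstar j = 0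
  · have hval : (vstar + τ • η) j = τ • η j := by rw [happ, hv, zero_add]
    have hnle : ‖(vstar + τ • η) j‖ ≤ τ := by
      rw [hval, norm_smul, Real.norm_eq_abs, abs_of_pos hτ]
      nlinarith [h1 j, norm_nonneg (η j)]
    simp only [shrink, WithLp.ofLp_toLp]
    rw [if_pos hnle]
    exact hv.symm
  · have hn : 0 < ‖vstar j‖ := norm_pos_iff.mpr hv
    have hval : (vstar + τ • η) j = (1 + τ * ‖vstar j‖⁻¹) • vstar j := by
      rw [happ, h2 j hv, smul_smul, add_smul, one_smul]
    have hcpos : 0 < 1 + τ * ‖vstar j‖⁻¹ := by positivity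
    have hnorm : ‖(vstar + τ • η) j‖ = ‖vstar j‖ + τ := by
      rw [hval, norm_smul, Real.norm_eq_abs, abs_of_pos hcpos]
      field_simp
    have hgt : ¬ ‖(vstar + τ • η) j‖ ≤ τ := by rw [hnorm]; linarith
    simp only [shrink, WithLp.ofLp_toLp, hgt, if_false]
    rw [hnorm, hval, smul_smul, ← sub_smul]
    have : ((1 : ℝ) + τ * ‖vstar j‖⁻¹ - (τ / (‖vstar j‖ + τ)) * (1 + τ * ‖vstar j‖⁻¹)) = 1 := by
      field_simp
      ring
    rw [this, one_smul]

end aux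

/-- Fixed-point characterization (Lemma 4.3 of the paper): if `v_*` is the
unique minimizer of the isotropic (1,2)-norm over `V_b`, then `q` is a fixed point of the
Douglas–Rachford operator `H_τ` iff `q = v_* + τη` for a dual certificate `η` (a subgradient
of the (1,2)-norm at `v_*` orthogonal to `U = K(ker A)`). -/
theorem tv_cs_drs_fixed_point_iff_dual_certificate
    {N d : ℕ} (hN : 0 < N) (hd : 0 < d)
    {X Z : Type*} [NormedAddCommGroup X] [InnerProductSpace ℝ X] [FiniteDimensional ℝ X]
    [NormedAddCommGroup Z] [InnerProductSpace ℝ Z] [FiniteDimensional ℝ Z]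
    (K : X →ₗ[ℝ] Vsp N d) (A : X →ₗ[ℝ] Z) (b : Z) (hb : ∃ u, A u = b)
    -- `P` is the metric projection onto the affine set `V_b = {K u : A u = b}`
    (P : Vsp N d → Vsp N d)
    (hP : ∀ q : Vsp N d, (∃ u, A u = b ∧ K u = P q) ∧
      ∀ v, (∃ u, A u = b ∧ K u = v) → ‖q - P q‖ ≤ ‖q - v‖)
    (τ : ℝ) (hτ : 0 < τ)
    (vstar : Vsp N d)
    -- `v_* ∈ V_b`
    (hvb : ∃ u, A u = b ∧ K u = vstar)
    -- `v_*` is the unique minimizer of `f(v) = Σ_j ‖v_j‖` over `V_b`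
    (hmin : ∀ v : Vsp N d, (∃ u, A u = b ∧ K u = v) → v ≠ vstar →
      (∑ j, ‖vstar j‖) < ∑ j, ‖v j‖) :
    ∀ q : Vsp N d,
      P ((2 : ℝ) • shrink τ q - q) + q - shrink τ q = q ↔
        ∃ η : Vsp N d, q = vstar + τ • η ∧
          (∀ u ∈ (LinearMap.ker A).map K, ⟪η, u⟫ = 0) ∧
          (∀ w : Vsp N d, (∑ j, ‖w j‖) ≥ (∑ j, ‖vstar j‖) + ⟪η, w - vstar⟫) := by
  set Ub := (LinearMap.ker A).map K with hUbdef
  have hsubU : ∀ v w : Vsp N d, (∃ u, A u = b ∧ K u = v) → (∃ u, A u = b ∧ K u = w) →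
      w - v ∈ Ub := by
    rintro v w ⟨u1, hu1, hKu1⟩ ⟨u2, hu2, hKu2⟩
    refine ⟨u2 - u1, ?_, ?_⟩
    · simp [LinearMap.mem_ker, map_sub, hu1, hu2]
    · rw [map_sub, hKu1, hKu2]
  have haddU : ∀ (v z : Vsp N d), (∃ u, A u = b ∧ K u = v) → z ∈ Ub →
      (∃ u, A u = b ∧ K u = v + z) := by
    rintro v z ⟨u1, hu1, hKu1⟩ ⟨u2, hu2, hKu2⟩
    refine ⟨u1 + u2, ?_, ?_⟩
    · simp [map_add, hu1, LinearMap.mem_ker.mp hu2]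
    · rw [map_add, hKu1, hKu2]
  have hPorth : ∀ x z : Vsp N d, z ∈ Ub → ⟪x - P x, z⟫ = 0 := by
    intro x z hz
    set c := ⟪x - P x, z⟫ with hc
    have key : ∀ t : ℝ, 0 ≤ -2 * t * c + t ^ 2 * ‖z‖ ^ 2 := by
      intro t
      have hmem : ∃ u, A u = b ∧ K u = P x + t • z :=
        haddU _ _ (hP x).1 (Submodule.smul_mem _ _ hz)
      have hle := (hP x).2 _ hmem
      have hrw : x - (P x + t • z) = (x - P x) - t • z := by rw [sub_add_eq_sub_sub]
      have hexp : ‖x - (P x + t • z)‖ ^ 2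
          = ‖x - P x‖ ^ 2 - 2 * (t * c) + t ^ 2 * ‖z‖ ^ 2 := by
        rw [hrw, norm_sub_sq_real, real_inner_smul_right, norm_smul, Real.norm_eq_abs,
          mul_pow, sq_abs, ← hc]
      nlinarith [norm_nonneg (x - P x), norm_nonneg (x - (P x + t • z)), hle]
    have h1 := key (c / (‖z‖ ^ 2 + 1))
    have hz2 : (0:ℝ) ≤ ‖z‖ ^ 2 := sq_nonneg _
    have hz3 : (0:ℝ) < ‖z‖ ^ 2 + 1 := by linarith
    by_contra hc0
    have hcc : 0 < c ^ 2 := by positivity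
    rw [div_pow] at h1
    have h2 : 0 ≤ (-2 * (c / (‖z‖ ^ 2 + 1)) * c + c ^ 2 / (‖z‖ ^ 2 + 1) ^ 2 * ‖z‖ ^ 2)
        * (‖z‖ ^ 2 + 1) ^ 2 := by positivity
    have h3 : (-2 * (c / (‖z‖ ^ 2 + 1)) * c + c ^ 2 / (‖z‖ ^ 2 + 1) ^ 2 * ‖z‖ ^ 2)
        * (‖z‖ ^ 2 + 1) ^ 2 = c ^ 2 * (-2 * (‖z‖ ^ 2 + 1) + ‖z‖ ^ 2) := by
      field_simp
    nlinarith
  have hPeq : ∀ x v : Vsp N d, (∃ u, A u = b ∧ K u = v) →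
      (∀ z ∈ Ub, ⟪x - v, z⟫ = 0) → P x = v := by
    intro x v hv hvz
    have hz : P x - v ∈ Ub := hsubU v (P x) hv (hP x).1
    have h1 := hPorth x _ hz
    have h2 := hvz _ hz
    have h3 : ⟪P x - v, P x - v⟫ = 0 := by
      have hr : (x - v) - (x - P x) = P x - v := by abel
      calc ⟪P x - v, P x - v⟫ = ⟪(x - v) - (x - P x), P x - v⟫ := by rw [hr]
        _ = ⟪x - v, P x - v⟫ - ⟪x - P x, P x - v⟫ := inner_sub_left _ _ _
        _ = 0 := by rw [h1, h2, sub_zero]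
    exact sub_eq_zero.mp (inner_self_eq_zero.mp h3)
  intro q
  constructor
  · intro heq
    set s := shrink τ q with hs
    have hPs : P ((2:ℝ) • s - q) = s := by
      have h : P ((2:ℝ) • s - q) + (q - s) = q := by
        rw [← add_sub_assoc]; exact heq
      have h2 := eq_sub_of_add_eq h
      rwa [sub_sub_cancel] at h2
    have hsVb : ∃ u, A u = b ∧ K u = s := by
      obtain ⟨u, h1, h2⟩ := (hP ((2:ℝ) • s - q)).1
      exact ⟨u, h1, by rw [h2, hPs]⟩
    set η : Vsp N d := τ⁻¹ • (q - s) with hηdef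
    have horth : ∀ z ∈ Ub, ⟪η, z⟫ = 0 := by
      intro z hz
      have h := hPorth ((2:ℝ) • s - q) z hz
      rw [hPs] at h
      have h2 : ((2:ℝ) • s - q) - s = -(q - s) := by module
      rw [h2, inner_neg_left, neg_eq_zero] at h
      rw [hηdef, real_inner_smul_left, h, mul_zero]
    have hη1 : ∀ j, ‖η j‖ ≤ 1 := by
      intro j
      have := (shrink_cert hτ q j).1
      simpa [hηdef, hs, PiLp.smul_apply, PiLp.sub_apply] using this
    have hη2 : ∀ j, ⟪η j, s j⟫ = ‖s j‖ := by
      intro j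
      have := (shrink_cert hτ q j).2
      simpa [hηdef, hs, PiLp.smul_apply, PiLp.sub_apply] using this
    have hsubgr : ∀ w : Vsp N d, (∑ j, ‖w j‖) ≥ (∑ j, ‖s j‖) + ⟪η, w - s⟫ :=
      sum_subgrad hη1 hη2
    have hsv : s = vstar := by
      by_contra hne
      have hlt := hmin s hsVb hne
      have h := hsubgr vstar
      have hz : ⟪η, vstar - s⟫ = 0 := horth _ (hsubU s vstar hsVb hvb)
      rw [hz] at h
      linarith
    refine ⟨η, ?_, horth, ?_⟩
    · rw [← hsv, hηdef, smul_smul, mul_inv_cancel₀ (ne_of_gt hτ), one_smul]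
      abel
    · rw [← hsv]
      exact hsubgr
  · rintro ⟨η, hq, horth, hsub⟩
    have h1 : ∀ j, ‖η j‖ ≤ 1 := eta_block_norm hsub
    have h2 : ∀ j, vstar j ≠ 0 → η j = ‖vstar j‖⁻¹ • vstar j := eta_block_eq hsub
    have hsq : shrink τ q = vstar := by rw [hq]; exact shrink_eq hτ h1 h2
    rw [hsq]
    have hPv : P ((2:ℝ) • vstar - q) = vstar := by
      apply hPeq _ _ hvb
      intro z hz
      have hr : (2:ℝ) • vstar - q - vstar = -(τ • η) := by rw [hq]; module
      rw [hr, inner_neg_left, real_inner_smul_left, horth z hz, mul_zero, neg_zero]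
    rw [hPv]
    abel
end
end

section
/- Assume v_* ∈ V_b is the unique minimizer of the isotropic (1,2)-norm f over V_b, and let S = {j : (v_*)_j ≠ 0}. If q and q' are both fixed points of H_τ for some τ > 0, then q − q' lies in U^⊥ ∩ W^⊥, where U^⊥ is the orthogonal complement of U = K(ker A) in V and W^⊥ = {z ∈ V : z_j = 0 for all j ∈ S}. In particular, if U^⊥ ∩ W^⊥ = {0}, then H_τ has at most one fixed point. -/
open scoped RealInnerProductSpace
open scoped Classical

noncomputable section

/-- Blockwise shrink on one Euclidean block. -/
noncomputable def shrinkB {d : ℕ} (τ : ℝ) (a : EuclideanSpace ℝ (Fin d)) :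
    EuclideanSpace ℝ (Fin d) :=
  if ‖a‖ ≤ τ then 0 else a - (τ / ‖a‖) • a

lemma shrink_apply {N d : ℕ} (τ : ℝ) (q : Vsp N d) (j : Fin N) :
    shrink τ q j = shrinkB τ (q j) := rfl

/-- Block prox inequality. -/
lemma block_prox {d : ℕ} {τ : ℝ} (hτ : 0 < τ) (a c : EuclideanSpace ℝ (Fin d)) :
    τ * ‖shrinkB τ a‖ + ⟪a - shrinkB τ a, c - shrinkB τ a⟫ ≤ τ * ‖c‖ := by
  by_cases h : ‖a‖ ≤ τ
  · simp only [shrinkB, if_pos h, norm_zero, mul_zero, sub_zero, zero_add]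
    have h1 := real_inner_le_norm a c
    have h2 := norm_nonneg c
    nlinarith [norm_nonneg a]
  · push_neg at h
    have hn : (0:ℝ) < ‖a‖ := lt_trans hτ h
    simp only [shrinkB, if_neg (not_le.mpr h)]
    have hveq : a - (τ / ‖a‖) • a = (1 - τ / ‖a‖) • a := by
      rw [sub_smul, one_smul]
    have hsub : a - (a - (τ / ‖a‖) • a) = (τ / ‖a‖) • a := by abel
    have hnv : ‖a - (τ / ‖a‖) • a‖ = ‖a‖ - τ := by
      rw [hveq, norm_smul, Real.norm_eq_abs,
        abs_of_nonneg (by rw [sub_nonneg]; exact (div_le_one hn).mpr h.le)]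
      field_simp
    have hips : ⟪a, a⟫ = ‖a‖ ^ 2 := real_inner_self_eq_norm_sq a
    rw [hsub, hnv, real_inner_smul_left, inner_sub_right, inner_sub_right,
      real_inner_smul_right, hips]
    have hc := real_inner_le_norm a c
    have key : (τ / ‖a‖) * ⟪a, c⟫ ≤ τ * ‖c‖ := by
      rw [div_mul_eq_mul_div, div_le_iff₀ hn]
      nlinarith
    have heq : τ * (‖a‖ - τ) + τ / ‖a‖ * (⟪a, c⟫ - (‖a‖ ^ 2 - τ / ‖a‖ * ‖a‖ ^ 2))
        = (τ / ‖a‖) * ⟪a, c⟫ := by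
      field_simp
      ring
    linarith [heq ▸ key]

lemma shrink_prox {N d : ℕ} {τ : ℝ} (hτ : 0 < τ) (q z : Vsp N d) :
    τ * (∑ j, ‖shrink τ q j‖) + ⟪q - shrink τ q, z - shrink τ q⟫ ≤ τ * ∑ j, ‖z j‖ := by
  rw [PiLp.inner_apply, Finset.mul_sum, Finset.mul_sum, ← Finset.sum_add_distrib]
  apply Finset.sum_le_sum
  intro j _
  simp only [PiLp.sub_apply, shrink_apply]
  exact block_prox hτ (q j) (z j)

/-- If the shrink of a block equals a nonzero vector `w`, the block is determined. -/
lemma shrinkB_eq_ne_zero {d : ℕ} {τ : ℝ} (hτ : 0 < τ) {a w : EuclideanSpace ℝ (Fin d)}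
    (hw : w ≠ 0) (h : shrinkB τ a = w) : a = (1 + τ / ‖w‖) • w := by
  by_cases hle : ‖a‖ ≤ τ
  · exact absurd ((by simpa [shrinkB, hle] using h : (0:EuclideanSpace ℝ (Fin d)) = w).symm) hw
  · push_neg at hle
    have hn : (0:ℝ) < ‖a‖ := lt_trans hτ hle
    simp only [shrinkB, if_neg (not_le.mpr hle)] at h
    have hmul : w = (1 - τ / ‖a‖) • a := by rw [← h, sub_smul, one_smul]
    have hnw : ‖w‖ = ‖a‖ - τ := by
      rw [hmul, norm_smul, Real.norm_eq_abs,
        abs_of_nonneg (by rw [sub_nonneg]; exact (div_le_one hn).mpr hle.le)]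
      field_simp
    rw [hnw, hmul, smul_smul]
    have : (1 + τ / (‖a‖ - τ)) * (1 - τ / ‖a‖) = 1 := by
      have h1 : ‖a‖ - τ ≠ 0 := sub_ne_zero.mpr (ne_of_gt hle)
      field_simp
      ring
    rw [this, one_smul]

/-- Metric projection onto an affine set `{K u : A u = b}` has residual orthogonal
to the direction space `K (ker A)`. -/
lemma proj_residual_orth {N d : ℕ}
    {X Z : Type*} [NormedAddCommGroup X] [InnerProductSpace ℝ X]
    [NormedAddCommGroup Z] [InnerProductSpace ℝ Z]
    (K : X →ₗ[ℝ] Vsp N d) (A : X →ₗ[ℝ] Z) (b : Z)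
    (P : Vsp N d → Vsp N d)
    (hP : ∀ q : Vsp N d, (∃ u, A u = b ∧ K u = P q) ∧
      ∀ v, (∃ u, A u = b ∧ K u = v) → ‖q - P q‖ ≤ ‖q - v‖)
    (x : Vsp N d) : x - P x ∈ ((LinearMap.ker A).map K)ᗮ := by
  rw [Submodule.mem_orthogonal]
  intro u hu
  obtain ⟨k, hk, rfl⟩ := hu
  replace hk : A k = 0 := hk
  obtain ⟨⟨u0, hu0, hKu0⟩, hm⟩ := hP x
  set w := x - P x with hw
  have key : ∀ t : ℝ, ‖w‖ ≤ ‖w - t • K k‖ := by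
    intro t
    have hmem : ∃ u, A u = b ∧ K u = P x + t • K k :=
      ⟨u0 + t • k, by simp [map_add, map_smul, hu0, hk], by simp [map_add, map_smul, hKu0]⟩
    have := hm _ hmem
    rwa [sub_add_eq_sub_sub] at this
  have expand : ∀ t : ℝ, ‖w - t • K k‖ ^ 2
      = ‖w‖ ^ 2 - 2 * t * ⟪w, K k⟫ + t ^ 2 * ‖K k‖ ^ 2 := by
    intro t
    rw [norm_sub_sq_real, real_inner_smul_right, norm_smul, Real.norm_eq_abs,
      mul_pow, sq_abs]
    ring
  have hz : ⟪w, K k⟫ = 0 := by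
    set c := ⟪w, K k⟫ with hc
    by_contra hcne
    set t := c / (‖K k‖ ^ 2 + 1) with ht
    have h1 : ‖w‖ ^ 2 ≤ ‖w - t • K k‖ ^ 2 := by
      have := key t
      nlinarith [norm_nonneg w, norm_nonneg (w - t • K k)]
    rw [expand t] at h1
    have hden : (0:ℝ) < ‖K k‖ ^ 2 + 1 := by positivity
    have hc2 : 0 < c ^ 2 := pow_pos (abs_pos.mpr hcne) 2 |>.trans_le (by rw [sq_abs])
    rw [ht] at h1
    have : 0 ≤ -2 * (c / (‖K k‖ ^ 2 + 1)) * c + (c / (‖K k‖ ^ 2 + 1)) ^ 2 * ‖K k‖ ^ 2 := by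
      linarith
    rw [div_pow] at this
    have heq2 : -2 * (c / (‖K k‖ ^ 2 + 1)) * c + c ^ 2 / (‖K k‖ ^ 2 + 1) ^ 2 * ‖K k‖ ^ 2
        = -(c ^ 2 * (‖K k‖ ^ 2 + 2) / (‖K k‖ ^ 2 + 1) ^ 2) := by
      field_simp
      ring
    rw [heq2] at this
    have hpos : (0:ℝ) < c ^ 2 * (‖K k‖ ^ 2 + 2) / (‖K k‖ ^ 2 + 1) ^ 2 :=
      div_pos (mul_pos hc2 (by positivity)) (by positivity)
    linarith
  rw [real_inner_comm] at hz
  exact hz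

/-- Uniqueness part of Lemma 4.3: any two fixed points of the
Douglas–Rachford operator `H_τ` differ by an element of `U^⊥ ∩ W^⊥`, where
`U = K(ker A)` and `W^⊥ = {z : z_j = 0 for all j ∈ S}`; in particular, if
`U^⊥ ∩ W^⊥ = {0}`, the fixed point is unique. -/
theorem tv_cs_drs_fixed_point_difference
    {N d : ℕ} (hN : 0 < N) (hd : 0 < d)
    {X Z : Type*} [NormedAddCommGroup X] [InnerProductSpace ℝ X] [FiniteDimensional ℝ X]
    [NormedAddCommGroup Z] [InnerProductSpace ℝ Z] [FiniteDimensional ℝ Z]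
    (K : X →ₗ[ℝ] Vsp N d) (A : X →ₗ[ℝ] Z) (b : Z) (hb : ∃ u, A u = b)
    -- `P` is the metric projection onto the affine set `V_b = {K u : A u = b}`
    (P : Vsp N d → Vsp N d)
    (hP : ∀ q : Vsp N d, (∃ u, A u = b ∧ K u = P q) ∧
      ∀ v, (∃ u, A u = b ∧ K u = v) → ‖q - P q‖ ≤ ‖q - v‖)
    (τ : ℝ) (hτ : 0 < τ)
    (vstar : Vsp N d)
    -- `v_* ∈ V_b`
    (hvb : ∃ u, A u = b ∧ K u = vstar)
    -- `v_*` is the unique minimizer of `f(v) = Σ_j ‖v_j‖` over `V_b`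
    (hmin : ∀ v : Vsp N d, (∃ u, A u = b ∧ K u = v) → v ≠ vstar →
      (∑ j, ‖vstar j‖) < ∑ j, ‖v j‖)
    (q q' : Vsp N d)
    (hq : P ((2 : ℝ) • shrink τ q - q) + q - shrink τ q = q)
    (hq' : P ((2 : ℝ) • shrink τ q' - q') + q' - shrink τ q' = q') :
    q - q' ∈ ((LinearMap.ker A).map K)ᗮ ⊓ vanishingOn (d := d) {j | vstar j ≠ 0} ∧
      (((LinearMap.ker A).map K)ᗮ ⊓ vanishingOn (d := d) {j | vstar j ≠ 0} = ⊥ →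
        q = q') := by
  have main : ∀ r : Vsp N d, P ((2 : ℝ) • shrink τ r - r) + r - shrink τ r = r →
      shrink τ r = vstar ∧ vstar - r ∈ ((LinearMap.ker A).map K)ᗮ := by
    intro r hr
    have hfix : P ((2 : ℝ) • shrink τ r - r) = shrink τ r := by
      rw [add_sub_assoc] at hr
      have h := eq_sub_of_add_eq hr
      rwa [sub_sub_cancel] at h
    have hVb : ∃ u, A u = b ∧ K u = shrink τ r := by
      obtain ⟨u0, hu0, hKu0⟩ := (hP ((2 : ℝ) • shrink τ r - r)).1
      exact ⟨u0, hu0, by rw [hKu0, hfix]⟩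
    have horth : shrink τ r - r ∈ ((LinearMap.ker A).map K)ᗮ := by
      have h := proj_residual_orth K A b P hP ((2 : ℝ) • shrink τ r - r)
      rw [hfix] at h
      have heq : (2 : ℝ) • shrink τ r - r - shrink τ r = shrink τ r - r := by
        rw [two_smul]; abel
      rwa [heq] at h
    have hminr : ∀ z : Vsp N d, (∃ u, A u = b ∧ K u = z) →
        (∑ j, ‖shrink τ r j‖) ≤ ∑ j, ‖z j‖ := by
      intro z hz
      have hp := shrink_prox hτ r z
      have hip : ⟪r - shrink τ r, z - shrink τ r⟫ = 0 := by
        obtain ⟨u1, hu1, hK1⟩ := hz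
        obtain ⟨u2, hu2, hK2⟩ := hVb
        have hmem : z - shrink τ r ∈ (LinearMap.ker A).map K :=
          ⟨u1 - u2, by simp [LinearMap.mem_ker, map_sub, hu1, hu2],
            by rw [map_sub, hK1, hK2]⟩
        have h0 := (Submodule.mem_orthogonal _ _).mp horth _ hmem
        have : r - shrink τ r = -(shrink τ r - r) := by abel
        rw [this, inner_neg_left, real_inner_comm, h0, neg_zero]
      rw [hip, add_zero] at hp
      exact le_of_mul_le_mul_left hp hτ
    have hs : shrink τ r = vstar := by
      by_contra hne
      have h1 := hmin (shrink τ r) hVb hne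
      have h2 := hminr vstar hvb
      linarith
    refine ⟨hs, ?_⟩
    rw [← hs]
    exact horth
  obtain ⟨hs, ho⟩ := main q hq
  obtain ⟨hs', ho'⟩ := main q' hq'
  have hU : q - q' ∈ ((LinearMap.ker A).map K)ᗮ := by
    have heq : q - q' = (vstar - q') - (vstar - q) := by abel
    rw [heq]
    exact Submodule.sub_mem _ ho' ho
  have hW : q - q' ∈ vanishingOn (d := d) {j | vstar j ≠ 0} := by
    show ∀ j ∈ {j | vstar j ≠ 0}, (q - q') j = 0
    intro j hj
    have h1 : shrinkB τ (q j) = vstar j := by rw [← shrink_apply, hs]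
    have h2 : shrinkB τ (q' j) = vstar j := by rw [← shrink_apply, hs']
    have e1 := shrinkB_eq_ne_zero hτ hj h1
    have e2 := shrinkB_eq_ne_zero hτ hj h2
    simp only [PiLp.sub_apply, e1, e2, sub_self]
  refine ⟨Submodule.mem_inf.mpr ⟨hU, hW⟩, fun hbot => ?_⟩
  have hmem := Submodule.mem_inf.mpr ⟨hU, hW⟩
  rw [hbot, Submodule.mem_bot] at hmem
  exact sub_eq_zero.mp hmem
end
end

section
/- Fix τ > 0 and v_* ∈ V with support S = {j : (v_*)_j ≠ 0}. For all q, q' ∈ Q, the Douglas–Rachford operator satisfies the identity H_τ(q) − H_τ(q') = (C ∘ P_S + (id − C) ∘ (id − P_S))(q − q') + τ (id − 2C)(P_S(𝒩(q)) − P_S(𝒩(q'))), where C is the orthogonal projection onto U = K(ker A) and P_S is the orthogonal projection onto W = {z ∈ V : z_j = 0 for all j ∉ S}. -/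
open scoped RealInnerProductSpace
open scoped Classical

noncomputable section

/-- Lemma 4.5 of the paper: on the set `Q`, the Douglas–Rachford
operator decomposes as
`H_τ(q) − H_τ(q') = (C∘P_S + (id−C)∘(id−P_S))(q−q') + τ(id−2C)(P_S 𝒩(q) − P_S 𝒩(q'))`,
where `C` is the orthogonal projection onto `U = K(ker A)` and `P_S` the orthogonal
projection onto `W = {z : z_j = 0 for all j ∉ S}`. -/
theorem tv_cs_drs_difference_decomposition
    {N d : ℕ} (hN : 0 < N) (hd : 0 < d)
    {X Z : Type*} [NormedAddCommGroup X] [InnerProductSpace ℝ X] [FiniteDimensional ℝ X]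
    [NormedAddCommGroup Z] [InnerProductSpace ℝ Z] [FiniteDimensional ℝ Z]
    (K : X →ₗ[ℝ] Vsp N d) (A : X →ₗ[ℝ] Z) (b : Z) (hb : ∃ u, A u = b)
    -- `P` is the metric projection onto the affine set `V_b = {K u : A u = b}`
    (P : Vsp N d → Vsp N d)
    (hP : ∀ q : Vsp N d, (∃ u, A u = b ∧ K u = P q) ∧
      ∀ v, (∃ u, A u = b ∧ K u = v) → ‖q - P q‖ ≤ ‖q - v‖)
    (τ : ℝ) (hτ : 0 < τ)
    (vstar : Vsp N d)
    -- `C` is the orthogonal projection onto `U = K(ker A)`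
    (C : Vsp N d →L[ℝ] Vsp N d)
    (hC : C = ((LinearMap.ker A).map K).subtypeL ∘L
      Submodule.orthogonalProjectionOnto ((LinearMap.ker A).map K))
    -- `P_S` is the orthogonal projection onto `W = {z : z_j = 0 for all j ∉ S}`
    (PS : Vsp N d →L[ℝ] Vsp N d)
    (hPS : PS = (vanishingOn (d := d) {j | vstar j = 0}).subtypeL ∘L
      Submodule.orthogonalProjectionOnto (vanishingOn (d := d) {j | vstar j = 0})) :
    ∀ q q' : Vsp N d,
      (∀ j, (vstar j = 0 → ‖q j‖ ≤ τ) ∧ (vstar j ≠ 0 → τ < ‖q j‖)) →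
      (∀ j, (vstar j = 0 → ‖q' j‖ ≤ τ) ∧ (vstar j ≠ 0 → τ < ‖q' j‖)) →
      (P ((2 : ℝ) • shrink τ q - q) + q - shrink τ q) -
          (P ((2 : ℝ) • shrink τ q' - q') + q' - shrink τ q') =
        (C (PS (q - q')) + (((q - q') - PS (q - q')) - C ((q - q') - PS (q - q')))) +
          τ • ((PS (nrmOp q) - PS (nrmOp q')) -
            (2 : ℝ) • C (PS (nrmOp q) - PS (nrmOp q'))) := by
  intro q q' hq hq'
  -- Coordinate formula for the projection `PS`
  have hPSapply : ∀ z : Vsp N d, PS z = WithLp.toLp 2 (fun j => if vstar j = 0 then 0 else z j) := by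
    intro z
    rw [hPS]
    simp only [ContinuousLinearMap.comp_apply, Submodule.subtypeL_apply,
      Submodule.coe_orthogonalProjectionOnto_apply]
    apply Submodule.eq_starProjection_of_mem_of_inner_eq_zero
    · intro j hj
      simp only [Set.mem_setOf_eq] at hj
      simp [hj]
    · intro w hw
      rw [PiLp.inner_apply]
      apply Finset.sum_eq_zero
      intro j _
      by_cases h : vstar j = 0
      · rw [hw j h, inner_zero_right]
      · simp [PiLp.sub_apply, h]
  -- Shrinkage formula on `Q`
  have hshrink : ∀ p : Vsp N d,
      (∀ j, (vstar j = 0 → ‖p j‖ ≤ τ) ∧ (vstar j ≠ 0 → τ < ‖p j‖)) →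
      shrink τ p = PS p - τ • PS (nrmOp p) := by
    intro p hp
    rw [hPSapply p, hPSapply (nrmOp p)]
    ext j
    by_cases h : vstar j = 0
    · have h1 : ‖p j‖ ≤ τ := (hp j).1 h
      simp [shrink, h, h1, PiLp.sub_apply, PiLp.smul_apply]
    · have h1 : τ < ‖p j‖ := (hp j).2 h
      have h2 : ¬ ‖p j‖ ≤ τ := not_le.2 h1
      have h3 : p j ≠ 0 := by
        intro hz
        rw [hz, norm_zero] at h1
        linarith
      simp only [shrink, nrmOp, WithLp.ofLp_toLp, if_neg h2, if_neg h3, if_neg h,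
        PiLp.sub_apply, PiLp.smul_apply]
      rw [div_eq_mul_inv, mul_smul]
  -- Affine projection formula for `P`
  obtain ⟨u0, hu0⟩ := hb
  set U := (LinearMap.ker A).map K with hU
  set v0 := K u0 with hv0
  have hmemU : ∀ v : Vsp N d, (∃ u, A u = b ∧ K u = v) ↔ v - v0 ∈ U := by
    intro v
    constructor
    · rintro ⟨u, hu, rfl⟩
      exact ⟨u - u0, by simp [LinearMap.mem_ker, hu, hu0], by simp [hv0]⟩
    · rintro ⟨w, hw, hKw⟩
      refine ⟨u0 + w, by simp [hu0, LinearMap.mem_ker.1 hw], ?_⟩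
      rw [map_add, hKw]
      abel
  have hPx : ∀ x, P x = v0 + C (x - v0) := by
    intro x
    obtain ⟨hmem, hmin⟩ := hP x
    have hyU : P x - v0 ∈ U := (hmemU _).1 hmem
    have key : (Submodule.orthogonalProjectionOnto U (x - v0) : Vsp N d) = P x - v0 := by
      apply Submodule.eq_starProjection_of_mem_of_inner_eq_zero hyU
      rw [← Submodule.norm_eq_iInf_iff_real_inner_eq_zero U hyU]
      apply le_antisymm
      · apply le_ciInf
        rintro ⟨w, hw⟩
        have hwv : ∃ u, A u = b ∧ K u = v0 + w := (hmemU _).2 (by simpa using hw)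
        have e1 : ‖x - v0 - (P x - v0)‖ = ‖x - P x‖ := by
          rw [show x - v0 - (P x - v0) = x - P x by abel]
        have e2 : ‖x - v0 - w‖ = ‖x - (v0 + w)‖ := by
          rw [show x - v0 - w = x - (v0 + w) by abel]
        rw [e1, e2]
        exact hmin _ hwv
      · apply ciInf_le _ (⟨P x - v0, hyU⟩ : (↑U : Set (Vsp N d)))
        refine ⟨0, ?_⟩
        rintro r ⟨w, rfl⟩
        exact norm_nonneg _
    rw [hC]
    simp only [ContinuousLinearMap.comp_apply, Submodule.subtypeL_apply]
    rw [key]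
    abel
  -- Conclusion by linear algebra
  rw [hshrink q hq, hshrink q' hq', hPx, hPx]
  simp only [map_sub, map_add, map_smul, smul_sub]
  module
end
end

section
/- Fix τ > 0, λ ∈ ℝ, and v_* ∈ V with support S = {j : (v_*)_j ≠ 0}. For all q, q' ∈ Q, the relaxed Douglas–Rachford operator H_τ^λ = (1−λ)·id + λ·H_τ satisfies H_τ^λ(q) − H_τ^λ(q') = ((1−λ)·id + λ(C ∘ P_S + (id − C) ∘ (id − P_S)))(q − q') + τλ (id − 2C)(P_S(𝒩(q)) − P_S(𝒩(q'))), where C is the orthogonal projection onto U = K(ker A) and P_S is the orthogonal projection onto W = {z ∈ V : z_j = 0 for all j ∉ S}. -/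
open scoped RealInnerProductSpace
open scoped Classical

noncomputable section

/-- The orthogonal projection onto `vanishingOn s` zeroes out the blocks in `s`. -/
lemma vanishingOn_proj_apply {N d : ℕ} (s : Set (Fin N)) (z : Vsp N d) :
    ((Submodule.orthogonalProjectionOnto (vanishingOn (d := d) s) z : Vsp N d)) =
      (WithLp.toLp 2 (fun j => if j ∈ s then 0 else z j) : Vsp N d) := by
  rw [← Submodule.starProjection_apply]
  apply Submodule.eq_starProjection_of_mem_of_inner_eq_zero
  · intro j hj
    simp [hj]
  · intro w hw
    rw [PiLp.inner_apply]
    apply Finset.sum_eq_zero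
    intro j _
    by_cases hj : j ∈ s
    · rw [hw j hj]
      simp
    · simp [PiLp.sub_apply, hj]

/-- Lemma 4.9 of the paper: on the set `Q`, the relaxed Douglas–Rachford
operator `H_τ^λ = (1−λ)·id + λ·H_τ` decomposes as
`H_τ^λ(q) − H_τ^λ(q') = ((1−λ)·id + λ(C∘P_S + (id−C)∘(id−P_S)))(q−q')
  + τλ(id−2C)(P_S 𝒩(q) − P_S 𝒩(q'))`. -/
theorem tv_cs_relaxed_drs_difference_decomposition
    {N d : ℕ} (hN : 0 < N) (hd : 0 < d)
    {X Z : Type*} [NormedAddCommGroup X] [InnerProductSpace ℝ X] [FiniteDimensional ℝ X]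
    [NormedAddCommGroup Z] [InnerProductSpace ℝ Z] [FiniteDimensional ℝ Z]
    (K : X →ₗ[ℝ] Vsp N d) (A : X →ₗ[ℝ] Z) (b : Z) (hb : ∃ u, A u = b)
    -- `P` is the metric projection onto the affine set `V_b = {K u : A u = b}`
    (P : Vsp N d → Vsp N d)
    (hP : ∀ q : Vsp N d, (∃ u, A u = b ∧ K u = P q) ∧
      ∀ v, (∃ u, A u = b ∧ K u = v) → ‖q - P q‖ ≤ ‖q - v‖)
    (τ : ℝ) (hτ : 0 < τ) (lam : ℝ)
    (vstar : Vsp N d)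
    -- `C` is the orthogonal projection onto `U = K(ker A)`
    (C : Vsp N d →L[ℝ] Vsp N d)
    (hC : C = ((LinearMap.ker A).map K).subtypeL ∘L
      Submodule.orthogonalProjectionOnto ((LinearMap.ker A).map K))
    -- `P_S` is the orthogonal projection onto `W = {z : z_j = 0 for all j ∉ S}`
    (PS : Vsp N d →L[ℝ] Vsp N d)
    (hPS : PS = (vanishingOn (d := d) {j | vstar j = 0}).subtypeL ∘L
      Submodule.orthogonalProjectionOnto (vanishingOn (d := d) {j | vstar j = 0})) :
    ∀ q q' : Vsp N d,
      (∀ j, (vstar j = 0 → ‖q j‖ ≤ τ) ∧ (vstar j ≠ 0 → τ < ‖q j‖)) →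
      (∀ j, (vstar j = 0 → ‖q' j‖ ≤ τ) ∧ (vstar j ≠ 0 → τ < ‖q' j‖)) →
      ((1 - lam) • q + lam • (P ((2 : ℝ) • shrink τ q - q) + q - shrink τ q)) -
          ((1 - lam) • q' + lam • (P ((2 : ℝ) • shrink τ q' - q') + q' - shrink τ q')) =
        ((1 - lam) • (q - q') +
            lam • (C (PS (q - q')) +
              (((q - q') - PS (q - q')) - C ((q - q') - PS (q - q'))))) +
          (τ * lam) • ((PS (nrmOp q) - PS (nrmOp q')) -
            (2 : ℝ) • C (PS (nrmOp q) - PS (nrmOp q'))) := by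
  intro q q' hq hq'
  set U : Submodule ℝ (Vsp N d) := (LinearMap.ker A).map K with hUdef
  -- PS formula
  have hPSapp : ∀ z : Vsp N d, PS z = (WithLp.toLp 2 (fun j => if vstar j = 0 then 0 else z j) : Vsp N d) := by
    intro z
    rw [hPS]
    exact (vanishingOn_proj_apply {j | vstar j = 0} z).trans (by congr 1; funext j; by_cases h : vstar j = 0 <;> simp [h])
  -- residual orthogonality of the metric projection
  have hperp : ∀ x : Vsp N d, x - P x ∈ Uᗮ := by
    intro x
    rw [Submodule.mem_orthogonal']
    intro u hu
    obtain ⟨w, hw, rfl⟩ := hu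
    obtain ⟨⟨u0, hu0, hKu0⟩, hmin⟩ := hP x
    have key : ∀ t : ℝ, ‖x - P x‖ ≤ ‖(x - P x) - t • K w‖ := by
      intro t
      have hmem : ∃ u, A u = b ∧ K u = P x + t • K w := by
        refine ⟨u0 + t • w, ?_, ?_⟩
        · simp [map_add, map_smul, hu0, LinearMap.mem_ker.mp hw]
        · simp [map_add, map_smul, hKu0]
      have := hmin (P x + t • K w) hmem
      have heq : x - (P x + t • K w) = (x - P x) - t • K w := by abel
      rwa [heq] at this
    set a : Vsp N d := x - P x with ha
    set v : Vsp N d := K w with hv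
    clear_value a v
    by_cases hv0 : v = 0
    · rw [hv0]
      simp
    · have hexp : ∀ t : ℝ, 0 ≤ t ^ 2 * ‖v‖ ^ 2 - 2 * t * ⟪a, v⟫ := by
        intro t
        have h1 := key t
        have h2 : ‖a‖ ^ 2 ≤ ‖a - t • v‖ ^ 2 :=
          pow_le_pow_left₀ (norm_nonneg _) h1 2
        rw [norm_sub_sq_real, real_inner_smul_right, norm_smul, Real.norm_eq_abs,
          mul_pow, sq_abs] at h2
        linarith
      have hnv : (0 : ℝ) < ‖v‖ ^ 2 := by
        have := norm_pos_iff.mpr hv0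
        positivity
      set c := ⟪a, v⟫ with hc
      have h := hexp (c / ‖v‖ ^ 2)
      have heq : (c / ‖v‖ ^ 2) ^ 2 * ‖v‖ ^ 2 - 2 * (c / ‖v‖ ^ 2) * c = -(c ^ 2 / ‖v‖ ^ 2) := by
        field_simp
        ring
      rw [heq] at h
      have hle : c ^ 2 ≤ 0 := by
        by_contra hlt
        push_neg at hlt
        have := div_pos hlt hnv
        linarith
      have hc0 : c ^ 2 = 0 := le_antisymm hle (sq_nonneg c)
      exact pow_eq_zero_iff two_ne_zero |>.mp hc0
  -- C is identity on U, zero on Uᗮ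
  have hCid : ∀ z ∈ U, C z = z := by
    intro z hz
    rw [hC]
    exact Submodule.starProjection_eq_self_iff.mpr hz
  have hCzero : ∀ z ∈ Uᗮ, C z = 0 := by
    intro z hz
    rw [hC]
    show ((U.orthogonalProjectionOnto z : Vsp N d)) = 0
    rw [Submodule.orthogonalProjectionOnto_apply_of_mem_orthogonal hz, Submodule.coe_zero]
  -- affine difference: C (x - y) = P x - P y
  have hCdiff : ∀ x y : Vsp N d, C (x - y) = P x - P y := by
    intro x y
    obtain ⟨⟨u1, hu1, hKu1⟩, -⟩ := hP x
    obtain ⟨⟨u2, hu2, hKu2⟩, -⟩ := hP y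
    have hmemU : P x - P y ∈ U := by
      refine ⟨u1 - u2, ?_, by rw [map_sub, hKu1, hKu2]⟩
      simp [LinearMap.mem_ker, map_sub, hu1, hu2]
    have hdecomp : x - y = (P x - P y) + ((x - P x) - (y - P y)) := by abel
    rw [hdecomp, map_add, hCid _ hmemU,
      hCzero _ (Submodule.sub_mem _ (hperp x) (hperp y)), add_zero]
  -- shrink formula on Q
  have hshrink : ∀ p : Vsp N d,
      (∀ j, (vstar j = 0 → ‖p j‖ ≤ τ) ∧ (vstar j ≠ 0 → τ < ‖p j‖)) →
      shrink τ p = PS p - τ • PS (nrmOp p) := by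
    intro p hp
    ext j : 1
    rw [hPSapp, hPSapp]
    simp only [shrink, PiLp.sub_apply, PiLp.smul_apply, PiLp.toLp_apply]
    by_cases hj : vstar j = 0
    · have := (hp j).1 hj
      simp [hj, this]
    · have hlt := (hp j).2 hj
      have hpj : p j ≠ 0 := by
        intro h0
        rw [h0, norm_zero] at hlt
        linarith
      have hnle : ¬ ‖p j‖ ≤ τ := not_le.mpr hlt
      simp only [hj, if_neg, hnle, if_false, nrmOp, hpj, PiLp.toLp_apply]
      rw [smul_smul, div_eq_mul_inv, mul_comm]
  rw [hshrink q hq, hshrink q' hq']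
  have hkey : P ((2:ℝ) • (PS q - τ • PS (nrmOp q)) - q)
      = P ((2:ℝ) • (PS q' - τ • PS (nrmOp q')) - q')
        + C (((2:ℝ) • (PS q - τ • PS (nrmOp q)) - q)
            - ((2:ℝ) • (PS q' - τ • PS (nrmOp q')) - q')) := by
    rw [hCdiff]
    abel
  rw [hkey]
  simp only [map_sub, map_smul]
  module
end
end

section
/- Let E be a finite-dimensional real inner product space and let U, W be subspaces of E with U ∩ W = {0}. Let P_U, P_W, P_{U⊥}, P_{W⊥} denote the orthogonal projections onto U, W, U^⊥, W^⊥, and set c = sup{⟨u, w⟩ : u ∈ U, w ∈ W, ‖u‖ = ‖w‖ = 1} (with c = 0 if U or W is the zero subspace). Then for every λ ∈ (0, 2) and every x ∈ E orthogonal to U^⊥ ∩ W^⊥, ‖(1−λ) x + λ (P_U(P_W x) + P_{U⊥}(P_{W⊥} x))‖ ≤ √(λ(2−λ)c² + (1−λ)²) · ‖x‖. Moreover c ≤ √(λ(2−λ)c² + (1−λ)²), and if c < 1 then √(λ(2−λ)c² + (1−λ)²) < 1. -/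
open scoped RealInnerProductSpace

noncomputable section

set_option maxHeartbeats 1000000

section AuxRelaxedProjection

variable {E : Type*} [NormedAddCommGroup E] [InnerProductSpace ℝ E] [FiniteDimensional ℝ E]

private theorem aux_projW_le (U W : Submodule ℝ E) (c : ℝ) (hc0 : 0 ≤ c)
    (hle : ∀ u ∈ U, ∀ w ∈ W, ⟪u, w⟫ ≤ c * (‖u‖ * ‖w‖)) {a : E} (ha : a ∈ W) :
    ‖(Submodule.orthogonalProjectionOnto U a : E)‖ ≤ c * ‖a‖ := by
  set p : E := (Submodule.orthogonalProjectionOnto U a : E) with hp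
  have hpU : p ∈ U := Submodule.coe_mem _
  have h1 : ⟪p, a⟫ = ‖p‖ ^ 2 := by
    have h0 : ⟪a - p, p⟫ = 0 := Submodule.starProjection_inner_eq_zero (K := U) a p hpU
    have := real_inner_self_eq_norm_sq p
    rw [inner_sub_left] at h0
    rw [real_inner_comm p a] at h0
    linarith
  have h2 : ⟪p, a⟫ ≤ c * (‖p‖ * ‖a‖) := hle p hpU a ha
  rcases eq_or_lt_of_le (norm_nonneg p) with h | h
  · rw [← h]; positivity
  · nlinarith

private theorem aux_projUperp_le (U W : Submodule ℝ E) (c : ℝ) (hc0 : 0 ≤ c)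
    (hle : ∀ u ∈ U, ∀ w ∈ W, ⟪u, w⟫ ≤ c * (‖u‖ * ‖w‖)) {b : E} (hbW : b ∈ Wᗮ)
    (hbK : b ∈ (Uᗮ ⊓ Wᗮ)ᗮ) :
    ‖(Submodule.orthogonalProjectionOnto Uᗮ b : E)‖ ≤ c * ‖b‖ := by
  have hK : (Uᗮ ⊓ Wᗮ)ᗮ = U ⊔ W := by
    rw [Submodule.inf_orthogonal, Submodule.orthogonal_orthogonal]
  rw [hK] at hbK
  obtain ⟨u, hu, w, hw, huw⟩ := Submodule.mem_sup.1 hbK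
  have hwb : ⟪w, b⟫ = 0 := (Submodule.mem_orthogonal W b).1 hbW w hw
  have h1 : ⟪u, w⟫ = -‖w‖ ^ 2 := by
    rw [← huw, inner_add_right, real_inner_comm u w, real_inner_self_eq_norm_sq] at hwb
    linarith [hwb]
  set q : E := (Submodule.orthogonalProjectionOnto U w : E) with hq
  set p : E := (Submodule.orthogonalProjectionOnto Uᗮ b : E) with hp
  -- p = P_{U⊥} w
  have hpw : p = (Submodule.orthogonalProjectionOnto Uᗮ w : E) := by
    have hu0 : Submodule.orthogonalProjectionOnto Uᗮ u = 0 :=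
      Submodule.orthogonalProjectionOnto_apply_of_mem_orthogonal
        (U.le_orthogonal_orthogonal hu)
    rw [hp, ← huw, map_add, hu0, Submodule.coe_add, Submodule.coe_zero, zero_add]
  -- Pythagoras for w
  have hw2 : ‖w‖ ^ 2 = ‖q‖ ^ 2 + ‖p‖ ^ 2 := by
    rw [hpw]
    exact Submodule.norm_sq_eq_add_norm_sq_projection w U
  -- ‖w‖² ≤ ‖u‖ ‖q‖
  have h2 : ‖w‖ ^ 2 ≤ ‖u‖ * ‖q‖ := by
    have h0 : ⟪w - q, u⟫ = 0 := Submodule.starProjection_inner_eq_zero (K := U) w u hu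
    rw [inner_sub_left] at h0
    have h4 : ⟪q, u⟫ = -‖w‖ ^ 2 := by
      rw [real_inner_comm u w, h1] at h0; linarith
    calc ‖w‖ ^ 2 = -⟪q, u⟫ := by rw [h4]; ring
      _ ≤ |⟪q, u⟫| := neg_le_abs _
      _ ≤ ‖q‖ * ‖u‖ := abs_real_inner_le_norm q u
      _ = ‖u‖ * ‖q‖ := by ring
  -- ‖w‖² ≤ c ‖u‖ ‖w‖
  have h3 : ‖w‖ ^ 2 ≤ c * (‖u‖ * ‖w‖) := by
    have := hle (-u) (neg_mem hu) w hw
    rw [inner_neg_left, h1, norm_neg] at this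
    linarith
  have hb2 : ‖b‖ ^ 2 = ‖u‖ ^ 2 - ‖w‖ ^ 2 := by
    rw [← huw, norm_add_sq_real, h1]; ring
  -- squared inequality
  have hsq : ‖p‖ ^ 2 ≤ (c * ‖b‖) ^ 2 := by
    rcases eq_or_lt_of_le (norm_nonneg w) with hB | hB
    · have hq2 : ‖q‖ ^ 2 = 0 := by nlinarith [norm_nonneg p, norm_nonneg q]
      nlinarith [norm_nonneg b]
    · have hBcA : ‖w‖ ≤ c * ‖u‖ := by
        rcases (mul_le_mul_iff_left₀ hB).1 (by nlinarith : ‖w‖ * ‖w‖ ≤ (c * ‖u‖) * ‖w‖) with h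
        exact h
      have hA : 0 < ‖u‖ := by
        by_contra hA
        push_neg at hA
        have : ‖u‖ = 0 := le_antisymm hA (norm_nonneg u)
        nlinarith
      have key1 : ‖w‖ ^ 2 * ‖w‖ ^ 2 ≤ (‖u‖ * ‖q‖) * (‖u‖ * ‖q‖) := by
        have := mul_self_le_mul_self (by positivity) h2
        nlinarith [this]
      have key2 : ‖w‖ * ‖w‖ ≤ (c * ‖u‖) * (c * ‖u‖) :=
        mul_self_le_mul_self (norm_nonneg w) hBcA
      have hnb : 0 ≤ ‖b‖ ^ 2 := sq_nonneg _
      nlinarith [mul_pos hA hA, key1, key2, hnb, hb2, hw2]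
  have := Real.sqrt_le_sqrt hsq
  rwa [Real.sqrt_sq (norm_nonneg p), Real.sqrt_sq (mul_nonneg hc0 (norm_nonneg b))] at this

private theorem aux_main (U W : Submodule ℝ E) (c : ℝ) (hc0 : 0 ≤ c)
    (hle : ∀ u ∈ U, ∀ w ∈ W, ⟪u, w⟫ ≤ c * (‖u‖ * ‖w‖))
    (hL1 : ∀ a ∈ W, ‖(Submodule.orthogonalProjectionOnto U a : E)‖ ≤ c * ‖a‖)
    (hL2 : ∀ b ∈ Wᗮ, b ∈ (Uᗮ ⊓ Wᗮ)ᗮ → ‖(Submodule.orthogonalProjectionOnto Uᗮ b : E)‖ ≤ c * ‖b‖)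
    (lam : ℝ) (hl0 : 0 < lam) (hl2 : lam < 2) (x : E) (hx : x ∈ (Uᗮ ⊓ Wᗮ)ᗮ) :
    ‖(1 - lam) • x +
        lam • ((U.subtypeL ∘L Submodule.orthogonalProjectionOnto U)
            ((W.subtypeL ∘L Submodule.orthogonalProjectionOnto W) x) +
          (Uᗮ.subtypeL ∘L Submodule.orthogonalProjectionOnto Uᗮ)
            ((Wᗮ.subtypeL ∘L Submodule.orthogonalProjectionOnto Wᗮ) x))‖ ≤
      Real.sqrt (lam * (2 - lam) * c ^ 2 + (1 - lam) ^ 2) * ‖x‖ := by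
  set a : E := (Submodule.orthogonalProjectionOnto W x : E) with ha
  set b : E := (Submodule.orthogonalProjectionOnto Wᗮ x : E) with hb
  have hab : a + b = x := Submodule.starProjection_add_starProjection_orthogonal (K := W) x
  have haW : a ∈ W := Submodule.coe_mem _
  have hbW : b ∈ Wᗮ := Submodule.coe_mem _
  have hab0 : ⟪a, b⟫ = 0 := Submodule.inner_right_of_mem_orthogonal haW hbW
  set u₁ : E := (Submodule.orthogonalProjectionOnto U a : E) with hu₁d
  set v₁ : E := (Submodule.orthogonalProjectionOnto Uᗮ b : E) with hv₁d
  have hgoal : ((U.subtypeL ∘L Submodule.orthogonalProjectionOnto U)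
            ((W.subtypeL ∘L Submodule.orthogonalProjectionOnto W) x) +
          (Uᗮ.subtypeL ∘L Submodule.orthogonalProjectionOnto Uᗮ)
            ((Wᗮ.subtypeL ∘L Submodule.orthogonalProjectionOnto Wᗮ) x)) = u₁ + v₁ := by
    simp [ContinuousLinearMap.comp_apply, Submodule.subtypeL_apply, ha, hb, hu₁d, hv₁d]
  rw [hgoal]
  have hu₁ : u₁ ∈ U := Submodule.coe_mem _
  have hv₁ : v₁ ∈ Uᗮ := Submodule.coe_mem _
  have huv0 : ⟪u₁, v₁⟫ = 0 := Submodule.inner_right_of_mem_orthogonal hu₁ hv₁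
  -- key inner products
  have hau : ⟪a, u₁⟫ = ‖u₁‖ ^ 2 := by
    have h0 : ⟪a - u₁, u₁⟫ = 0 := Submodule.starProjection_inner_eq_zero (K := U) a u₁ hu₁
    rw [inner_sub_left, real_inner_self_eq_norm_sq] at h0
    linarith
  have hbv : ⟪b, v₁⟫ = ‖v₁‖ ^ 2 := by
    have h0 : ⟪b - v₁, v₁⟫ = 0 := Submodule.starProjection_inner_eq_zero (K := Uᗮ) b v₁ hv₁
    rw [inner_sub_left, real_inner_self_eq_norm_sq] at h0
    linarith
  have hcross : ⟪a, v₁⟫ + ⟪b, u₁⟫ = 0 := by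
    have h5 : ⟪a, v₁⟫ = ⟪(Submodule.orthogonalProjectionOnto Uᗮ a : E), b⟫ := by
      rw [hv₁d]; exact (Submodule.inner_starProjection_left_eq_right (K := Uᗮ) a b).symm
    have h6 : (Submodule.orthogonalProjectionOnto Uᗮ a : E) = a - u₁ := by
      have h7 : (Submodule.orthogonalProjectionOnto U a : E) + (Submodule.orthogonalProjectionOnto Uᗮ a : E) = a :=
        Submodule.starProjection_add_starProjection_orthogonal (K := U) a
      rw [← hu₁d] at h7
      exact eq_sub_of_add_eq' h7
    rw [h5, h6, inner_sub_left, hab0, real_inner_comm b u₁]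
    ring
  have hxh : ⟪x, u₁ + v₁⟫ = ‖u₁‖ ^ 2 + ‖v₁‖ ^ 2 := by
    rw [← hab, inner_add_left, inner_add_right, inner_add_right, hau, hbv]
    linarith
  have hnorm_h : ‖u₁ + v₁‖ ^ 2 = ‖u₁‖ ^ 2 + ‖v₁‖ ^ 2 := by
    rw [norm_add_sq_real, huv0]; ring
  -- component bounds
  have hbK : b ∈ (Uᗮ ⊓ Wᗮ)ᗮ := by
    have haK : a ∈ (Uᗮ ⊓ Wᗮ)ᗮ := by
      have hK : (Uᗮ ⊓ Wᗮ)ᗮ = U ⊔ W := by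
        rw [Submodule.inf_orthogonal, Submodule.orthogonal_orthogonal]
      rw [hK]
      exact Submodule.mem_sup_right haW
    have : b = x - a := by rw [← hab]; abel
    rw [this]
    exact Submodule.sub_mem _ hx haK
  have hu₁b : ‖u₁‖ ≤ c * ‖a‖ := hL1 a haW
  have hv₁b : ‖v₁‖ ≤ c * ‖b‖ := hL2 b hbW hbK
  have hxab : ‖x‖ ^ 2 = ‖a‖ ^ 2 + ‖b‖ ^ 2 := by
    rw [← hab, norm_add_sq_real, hab0]; ring
  have hH : ‖u₁ + v₁‖ ^ 2 ≤ c ^ 2 * ‖x‖ ^ 2 := by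
    rw [hnorm_h, hxab]
    nlinarith [mul_self_le_mul_self (norm_nonneg u₁) hu₁b,
      mul_self_le_mul_self (norm_nonneg v₁) hv₁b, norm_nonneg a, norm_nonneg b]
  -- expand the norm
  set s : ℝ := lam * (2 - lam) * c ^ 2 + (1 - lam) ^ 2 with hs
  have hsq : ‖(1 - lam) • x + lam • (u₁ + v₁)‖ ^ 2 ≤ s * ‖x‖ ^ 2 := by
    have hexp : ‖(1 - lam) • x + lam • (u₁ + v₁)‖ ^ 2 =
        (1 - lam) ^ 2 * ‖x‖ ^ 2 + 2 * ((1 - lam) * lam) * ⟪x, u₁ + v₁⟫ +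
          lam ^ 2 * ‖u₁ + v₁‖ ^ 2 := by
      rw [norm_add_sq_real, norm_smul, norm_smul, real_inner_smul_left, real_inner_smul_right,
        mul_pow, mul_pow, Real.norm_eq_abs, Real.norm_eq_abs, sq_abs, sq_abs]
      ring
    rw [hexp, hxh, ← hnorm_h, hs]
    nlinarith [mul_le_mul_of_nonneg_left hH
      (le_of_lt (mul_pos hl0 (by linarith : (0:ℝ) < 2 - lam)))]
  have hs0 : 0 ≤ s := by
    have h8 : 0 ≤ lam * (2 - lam) * c ^ 2 :=
      mul_nonneg (mul_nonneg hl0.le (by linarith)) (sq_nonneg c)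
    rw [hs]
    have h9 := sq_nonneg (1 - lam)
    linarith
  calc ‖(1 - lam) • x + lam • (u₁ + v₁)‖
      = Real.sqrt (‖(1 - lam) • x + lam • (u₁ + v₁)‖ ^ 2) := (Real.sqrt_sq (norm_nonneg _)).symm
    _ ≤ Real.sqrt (s * ‖x‖ ^ 2) := Real.sqrt_le_sqrt hsq
    _ = Real.sqrt s * ‖x‖ := by
        rw [Real.sqrt_mul hs0, Real.sqrt_sq (norm_nonneg x)]

end AuxRelaxedProjection

/-- Norm estimate for the relaxed operator `H̃^λ = (1−λ)I + λH̃`: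
if `U ∩ W = {0}` and `c = sup{⟨u,w⟩ : u ∈ U, w ∈ W, ‖u‖ = 1 ∧ ‖w‖ = 1}` (`c = 0` if `U` or
`W` is trivial, matching `sSup ∅ = 0` in `ℝ`), then for `λ ∈ (0,2)` and every
`x ⊥ (U^⊥ ∩ W^⊥)`, `‖(1−λ)x + λ(P_U P_W x + P_{U⊥} P_{W⊥} x)‖ ≤ √(λ(2−λ)c² + (1−λ)²)‖x‖`;
moreover `c ≤ √(λ(2−λ)c² + (1−λ)²)`, and the latter is `< 1` whenever `c < 1`. -/
theorem relaxed_projection_composition_norm_bound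
    {E : Type*} [NormedAddCommGroup E] [InnerProductSpace ℝ E] [FiniteDimensional ℝ E]
    (U W : Submodule ℝ E) (hUW : U ⊓ W = ⊥) (c : ℝ)
    (hc : c = sSup {r : ℝ | ∃ u ∈ U, ∃ w ∈ W, ‖u‖ = 1 ∧ ‖w‖ = 1 ∧ r = ⟪u, w⟫}) :
    (∀ lam : ℝ, 0 < lam → lam < 2 → ∀ x ∈ (Uᗮ ⊓ Wᗮ)ᗮ,
      ‖(1 - lam) • x +
          lam • ((U.subtypeL ∘L Submodule.orthogonalProjectionOnto U)
              ((W.subtypeL ∘L Submodule.orthogonalProjectionOnto W) x) +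
            (Uᗮ.subtypeL ∘L Submodule.orthogonalProjectionOnto Uᗮ)
              ((Wᗮ.subtypeL ∘L Submodule.orthogonalProjectionOnto Wᗮ) x))‖ ≤
        Real.sqrt (lam * (2 - lam) * c ^ 2 + (1 - lam) ^ 2) * ‖x‖) ∧
      (∀ lam : ℝ, 0 < lam → lam < 2 →
        c ≤ Real.sqrt (lam * (2 - lam) * c ^ 2 + (1 - lam) ^ 2)) ∧
      (∀ lam : ℝ, 0 < lam → lam < 2 → c < 1 →
        Real.sqrt (lam * (2 - lam) * c ^ 2 + (1 - lam) ^ 2) < 1) := by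
  set S : Set ℝ := {r : ℝ | ∃ u ∈ U, ∃ w ∈ W, ‖u‖ = 1 ∧ ‖w‖ = 1 ∧ r = ⟪u, w⟫} with hS
  have hbdd : BddAbove S := by
    refine ⟨1, fun r hr => ?_⟩
    obtain ⟨u, hu, w, hw, hnu, hnw, hr⟩ := hr
    rw [hr]
    calc ⟪u, w⟫ ≤ ‖u‖ * ‖w‖ := real_inner_le_norm u w
      _ = 1 := by rw [hnu, hnw]; ring
  have hc0 : 0 ≤ c := by
    rcases Set.eq_empty_or_nonempty S with hSe | hSe
    · rw [hc, hSe, Real.sSup_empty]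
    · obtain ⟨r, hr⟩ := hSe
      obtain ⟨u, hu, w, hw, hnu, hnw, hre⟩ := hr
      have h1 : r ≤ c := by rw [hc]; exact le_csSup hbdd ⟨u, hu, w, hw, hnu, hnw, hre⟩
      have h2 : -r ≤ c := by
        rw [hc]
        refine le_csSup hbdd ⟨-u, neg_mem hu, w, hw, ?_, hnw, ?_⟩
        · rw [norm_neg]; exact hnu
        · rw [inner_neg_left, hre]
      linarith
  have hc1 : c ≤ 1 := by
    rcases Set.eq_empty_or_nonempty S with hSe | hSe
    · rw [hc, hSe, Real.sSup_empty]; norm_num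
    · rw [hc]
      apply csSup_le hSe
      intro r hr
      obtain ⟨u, hu, w, hw, hnu, hnw, hre⟩ := hr
      rw [hre]
      calc ⟪u, w⟫ ≤ ‖u‖ * ‖w‖ := real_inner_le_norm u w
        _ = 1 := by rw [hnu, hnw]; ring
  have hle : ∀ u ∈ U, ∀ w ∈ W, ⟪u, w⟫ ≤ c * (‖u‖ * ‖w‖) := by
    intro u hu w hw
    rcases eq_or_ne u 0 with hu0 | hu0
    · simp [hu0]
    rcases eq_or_ne w 0 with hw0 | hw0
    · simp [hw0]
    have hnu : ‖u‖ ≠ 0 := norm_ne_zero_iff.2 hu0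
    have hnw : ‖w‖ ≠ 0 := norm_ne_zero_iff.2 hw0
    set r : ℝ := ⟪‖u‖⁻¹ • u, ‖w‖⁻¹ • w⟫ with hr
    have hrS : r ∈ S := by
      refine ⟨‖u‖⁻¹ • u, Submodule.smul_mem _ _ hu, ‖w‖⁻¹ • w, Submodule.smul_mem _ _ hw,
        norm_smul_inv_norm hu0, norm_smul_inv_norm hw0, rfl⟩
    have hrc : r ≤ c := by rw [hc]; exact le_csSup hbdd hrS
    have hexp : ⟪u, w⟫ = ‖u‖ * ‖w‖ * r := by
      rw [hr, real_inner_smul_left, real_inner_smul_right]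
      field_simp
    rw [hexp]
    have hn : (0:ℝ) ≤ ‖u‖ * ‖w‖ := by positivity
    calc ‖u‖ * ‖w‖ * r ≤ ‖u‖ * ‖w‖ * c := by
          exact mul_le_mul_of_nonneg_left hrc hn
      _ = c * (‖u‖ * ‖w‖) := by ring
  refine ⟨?_, ?_, ?_⟩
  · intro lam hl0 hl2 x hx
    exact aux_main U W c hc0 hle
      (fun a ha => aux_projW_le U W c hc0 hle ha)
      (fun b hbW hbK => aux_projUperp_le U W c hc0 hle hbW hbK)
      lam hl0 hl2 x hx
  · intro lam hl0 hl2
    have harg : c ^ 2 ≤ lam * (2 - lam) * c ^ 2 + (1 - lam) ^ 2 := by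
      nlinarith [sq_nonneg (1 - lam), mul_nonneg (sq_nonneg (1 - lam)) (by nlinarith : (0:ℝ) ≤ 1 - c ^ 2)]
    calc c = Real.sqrt (c ^ 2) := (Real.sqrt_sq hc0).symm
      _ ≤ Real.sqrt (lam * (2 - lam) * c ^ 2 + (1 - lam) ^ 2) := Real.sqrt_le_sqrt harg
  · intro lam hl0 hl2 hclt
    have h1 : (1 - lam) ^ 2 < 1 := by nlinarith
    have h2 : (0:ℝ) < 1 - c ^ 2 := by nlinarith
    have harg : lam * (2 - lam) * c ^ 2 + (1 - lam) ^ 2 < 1 := by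
      nlinarith [mul_pos (by nlinarith : (0:ℝ) < 1 - (1 - lam) ^ 2) h2]
    calc Real.sqrt (lam * (2 - lam) * c ^ 2 + (1 - lam) ^ 2)
        < Real.sqrt 1 := Real.sqrt_lt_sqrt (by
          nlinarith [mul_nonneg (mul_nonneg hl0.le (by linarith : (0:ℝ) ≤ 2 - lam)) (sq_nonneg c),
            sq_nonneg (1 - lam)]) harg
      _ = 1 := Real.sqrt_one
end
end

section
/- Fix τ > 0 and v_* ∈ V with support S = {j : (v_*)_j ≠ 0}. Suppose q_* ∈ V is a fixed point of H_τ lying in the interior of Q (i.e., ‖(q_*)_j‖ < τ for every j ∉ S and ‖(q_*)_j‖ > τ for every j ∈ S). If a sequence (q_k) in V satisfies q_{k+1} = H_τ(q_k) for all k and q_k → q_*, then there exists K ∈ ℕ such that for all k ≥ K, the orthogonal projection of q_k − q_* onto U^⊥ ∩ W^⊥ is zero, where U^⊥ is the orthogonal complement of U = K(ker A) and W^⊥ = {z ∈ V : z_j = 0 for all j ∈ S}. -/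
open scoped RealInnerProductSpace
open scoped Classical

noncomputable section

/-- Lemma 4.7 of the paper: if the Douglas–Rachford iterates converge to
an interior fixed point `q_*`, then eventually the orthogonal projection of `q_k − q_*`
onto `U^⊥ ∩ W^⊥` vanishes, where `U = K(ker A)` and
`W^⊥ = {z : z_j = 0 for all j ∈ S}`. -/
theorem tv_cs_drs_eventual_projection_zero
    {N d : ℕ} (hN : 0 < N) (hd : 0 < d)
    {X Z : Type*} [NormedAddCommGroup X] [InnerProductSpace ℝ X] [FiniteDimensional ℝ X]
    [NormedAddCommGroup Z] [InnerProductSpace ℝ Z] [FiniteDimensional ℝ Z]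
    (K : X →ₗ[ℝ] Vsp N d) (A : X →ₗ[ℝ] Z) (b : Z) (hb : ∃ u, A u = b)
    -- `P` is the metric projection onto the affine set `V_b = {K u : A u = b}`
    (P : Vsp N d → Vsp N d)
    (hP : ∀ q : Vsp N d, (∃ u, A u = b ∧ K u = P q) ∧
      ∀ v, (∃ u, A u = b ∧ K u = v) → ‖q - P q‖ ≤ ‖q - v‖)
    (τ : ℝ) (hτ : 0 < τ)
    (vstar : Vsp N d)
    (qstar : Vsp N d)
    -- `q_*` is a fixed point of `H_τ`
    (hfix : P ((2 : ℝ) • shrink τ qstar - qstar) + qstar - shrink τ qstar = qstar)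
    -- `q_*` lies in the interior of `Q`
    (hint : ∀ j, (vstar j = 0 → ‖qstar j‖ < τ) ∧ (vstar j ≠ 0 → τ < ‖qstar j‖))
    (q : ℕ → Vsp N d)
    -- `q_{k+1} = H_τ(q_k)`
    (hrec : ∀ k, q (k + 1) =
      P ((2 : ℝ) • shrink τ (q k) - q k) + q k - shrink τ (q k))
    (hlim : Filter.Tendsto q Filter.atTop (nhds qstar)) :
    ∃ K₀ : ℕ, ∀ k, K₀ ≤ k →
      Submodule.orthogonalProjection
        (((LinearMap.ker A).map K)ᗮ ⊓ vanishingOn (d := d) {j | vstar j ≠ 0})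
        (q k - qstar) = 0 := by
  classical
  set S : Set (Fin N) := {j | vstar j ≠ 0} with hSdef
  set U : Submodule ℝ (Vsp N d) := (LinearMap.ker A).map K with hUdef
  set E : Submodule ℝ (Vsp N d) := Uᗮ ⊓ vanishingOn (d := d) S with hEdef
  -- `P(2 S q* - q*) = S q*`
  have hPstar : P ((2 : ℝ) • shrink τ qstar - qstar) = shrink τ qstar := by
    have h := hfix
    rw [sub_eq_iff_eq_add, add_comm (P _) qstar] at h
    exact add_left_cancel h
  -- componentwise continuity of evaluation
  have hev : ∀ j : Fin N, Continuous fun x : Vsp N d => x j := fun j =>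
    (continuous_apply j).comp (PiLp.continuous_ofLp 2 fun _ : Fin N => EuclideanSpace ℝ (Fin d))
  -- eventual interiority
  have hev2 : ∀ᶠ k in Filter.atTop, ∀ j,
      (vstar j = 0 → ‖q k j‖ ≤ τ) ∧ (vstar j ≠ 0 → τ < ‖q k j‖) := by
    rw [Filter.eventually_all]
    intro j
    have htd : Filter.Tendsto (fun k => ‖q k j‖) Filter.atTop (nhds ‖qstar j‖) :=
      (((hev j).tendsto qstar).comp hlim).norm
    by_cases hj : vstar j = 0
    · have hlt := (hint j).1 hj
      filter_upwards [htd.eventually (eventually_lt_nhds hlt)] with k hk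
      exact ⟨fun _ => le_of_lt hk, fun h => absurd hj h⟩
    · have hlt := (hint j).2 hj
      filter_upwards [htd.eventually (eventually_gt_nhds hlt)] with k hk
      exact ⟨fun h => absurd h hj, fun _ => hk⟩
  obtain ⟨K₀, hK₀⟩ := Filter.eventually_atTop.1 hev2
  -- key step: the projection is constant for `k ≥ K₀`
  have key : ∀ k, K₀ ≤ k →
      Submodule.orthogonalProjection E (q (k + 1) - qstar) = Submodule.orthogonalProjection E (q k - qstar) := by
    intro k hk
    have hkq := hK₀ k hk
    have hdiff : q (k + 1) - qstar - (q k - qstar) =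
        (P ((2 : ℝ) • shrink τ (q k) - q k) - P ((2 : ℝ) • shrink τ qstar - qstar)) +
          (shrink τ qstar - shrink τ (q k)) := by
      rw [hrec k, hPstar]
      abel
    -- the first piece is in `U`
    obtain ⟨u₁, hu₁, hKu₁⟩ := (hP ((2 : ℝ) • shrink τ (q k) - q k)).1
    obtain ⟨u₂, hu₂, hKu₂⟩ := (hP ((2 : ℝ) • shrink τ qstar - qstar)).1
    have hz₁ : P ((2 : ℝ) • shrink τ (q k) - q k) - P ((2 : ℝ) • shrink τ qstar - qstar) ∈ U :=
      ⟨u₁ - u₂, by simp [LinearMap.mem_ker, hu₁, hu₂], by rw [map_sub, hKu₁, hKu₂]⟩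
    -- the second piece is orthogonal to `vanishingOn S`
    have hz₂ : shrink τ qstar - shrink τ (q k) ∈ (vanishingOn (d := d) S)ᗮ := by
      rw [Submodule.mem_orthogonal']
      intro e he
      rw [PiLp.inner_apply]
      refine Finset.sum_eq_zero fun j _ => ?_
      by_cases hj : vstar j = 0
      · have h1 : shrink τ qstar j = 0 := by
          simp [shrink, le_of_lt ((hint j).1 hj)]
        have h2 : shrink τ (q k) j = 0 := by
          simp [shrink, (hkq j).1 hj]
        simp [h1, h2]
      · have : e j = 0 := he j hj
        simp [this]
    have hz : q (k + 1) - qstar - (q k - qstar) ∈ Eᗮ := by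
      rw [hdiff]
      refine Submodule.add_mem _ ?_ ?_
      · exact Submodule.orthogonal_le inf_le_left (Submodule.le_orthogonal_orthogonal U hz₁)
      · exact Submodule.orthogonal_le inf_le_right hz₂
    have h0 := Submodule.orthogonalProjectionOnto_apply_of_mem_orthogonal hz
    have hms : Submodule.orthogonalProjection E (q (k + 1) - qstar) -
        Submodule.orthogonalProjection E (q k - qstar) = 0 := by
      rw [← map_sub]
      exact h0
    exact sub_eq_zero.mp hms
  -- hence it is constant from `K₀` on
  have const : ∀ k, K₀ ≤ k →
      Submodule.orthogonalProjection E (q k - qstar) = Submodule.orthogonalProjection E (q K₀ - qstar) := by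
    intro k hk
    induction k, hk using Nat.le_induction with
    | base => rfl
    | succ n hn ih => rw [key n hn, ih]
  -- the projection tends to `0`
  have hlim0 : Filter.Tendsto (fun k => Submodule.orthogonalProjection E (q k - qstar))
      Filter.atTop (nhds 0) := by
    have h1 : Filter.Tendsto (fun k => q k - qstar) Filter.atTop (nhds 0) := by
      simpa using hlim.sub (tendsto_const_nhds (x := qstar))
    have h2 := ((Submodule.orthogonalProjection E).continuous.tendsto 0).comp h1
    rw [map_zero] at h2
    exact h2
  have hc : Submodule.orthogonalProjection E (q K₀ - qstar) = 0 := by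
    have h1 : Filter.Tendsto (fun _ : ℕ => Submodule.orthogonalProjection E (q K₀ - qstar))
        Filter.atTop (nhds 0) := by
      refine hlim0.congr' ?_
      filter_upwards [Filter.eventually_ge_atTop K₀] with k hk
      exact const k hk
    exact tendsto_nhds_unique tendsto_const_nhds h1
  exact ⟨K₀, fun k hk => (const k hk).trans hc⟩
end
end

section
/- Let E and F be finite-dimensional real inner product spaces, K : F → E a linear map, h : F → ℝ a convex function, β > 0, and q ∈ E. Define the convex conjugate h* : F → ℝ ∪ {+∞} by h*(w) = sup_{p ∈ F} (⟨w, p⟩ − h(p)). Suppose p̂ ∈ F minimizes p ↦ h(p) + (β/2)‖Kp − q‖² over F. Then ŷ := β(Kp̂ − q) minimizes y ↦ h*(−K*y) + (1/(2β))‖y + βq‖² over E; that is, h*(−K*ŷ) is finite and for every y ∈ E, h*(−K*ŷ) + (1/(2β))‖ŷ + βq‖² ≤ h*(−K*y) + (1/(2β))‖y + βq‖² (inequality in ℝ ∪ {+∞}). -/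
open scoped RealInnerProductSpace

noncomputable section

/-- Subgradient inequality extracted from the minimality of `phat`. -/
private lemma subgrad_aux
    {E F : Type*} [NormedAddCommGroup E] [InnerProductSpace ℝ E]
    [NormedAddCommGroup F] [InnerProductSpace ℝ F]
    (K : F →ₗ[ℝ] E) (h : F → ℝ) (hconv : ConvexOn ℝ Set.univ h)
    (β : ℝ) (hβ : 0 < β) (q : E) (phat : F)
    (hmin : ∀ p : F, h phat + (β / 2) * ‖K phat - q‖ ^ 2 ≤
      h p + (β / 2) * ‖K p - q‖ ^ 2) (p : F) :
    h phat - h p ≤ β * ⟪K phat - q, K p - K phat⟫ := by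
  set u : E := K phat - q with hu
  set v : E := K p - K phat with hv
  refine le_of_forall_pos_le_add ?_
  intro ε hε
  set C : ℝ := (β / 2) * ‖v‖ ^ 2 with hC
  have hC0 : 0 ≤ C := by positivity
  set t : ℝ := min 1 (ε / (C + 1)) with ht
  have ht0 : 0 < t := lt_min one_pos (by positivity)
  have ht1 : t ≤ 1 := min_le_left _ _
  have htε : t ≤ ε / (C + 1) := min_le_right _ _
  have hcomb := hconv.2 (Set.mem_univ phat) (Set.mem_univ p)
    (by linarith : (0:ℝ) ≤ 1 - t) (le_of_lt ht0) (by ring)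
  have hpt := hmin ((1 - t) • phat + t • p)
  have hKpt : K ((1 - t) • phat + t • p) - q = u + t • v := by
    simp only [map_add, map_smul, hu, hv]
    module
  rw [hKpt] at hpt
  have hexp : ‖u + t • v‖ ^ 2 = ‖u‖ ^ 2 + 2 * (t * ⟪u, v⟫) + t ^ 2 * ‖v‖ ^ 2 := by
    rw [norm_add_sq_real, real_inner_smul_right, norm_smul]
    rw [Real.norm_eq_abs, abs_of_pos ht0]
    ring
  rw [hexp] at hpt
  have hcomb' : h ((1 - t) • phat + t • p) ≤ (1 - t) * h phat + t * h p := by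
    simpa using hcomb
  have hmul : t * (h phat - h p) ≤ t * (β * ⟪u, v⟫ + t * C) := by
    rw [hC]; nlinarith [hpt, hcomb']
  have hdiv : h phat - h p ≤ β * ⟪u, v⟫ + t * C :=
    le_of_mul_le_mul_left (by linarith [hmul]) ht0
  have htC : t * C ≤ ε := by
    have h1 : t * C ≤ (ε / (C + 1)) * C :=
      mul_le_mul_of_nonneg_right htε hC0
    have h2 : (ε / (C + 1)) * C ≤ ε := by
      rw [div_mul_eq_mul_div, div_le_iff₀ (by linarith : (0:ℝ) < C + 1)]
      nlinarith
    linarith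
  linarith

/-- Lemma C.1 of the paper (chain-rule/prox identity): if `p̂` minimizes
`p ↦ h(p) + (β/2)‖Kp − q‖²`, then `ŷ = β(Kp̂ − q)` minimizes
`y ↦ h*(−K*y) + ‖y + βq‖²/(2β)` (with values in `ℝ ∪ {+∞}`, modeled by `EReal`),
and `h*(−K*ŷ)` is finite. -/
theorem prox_chain_rule_identity
    {E F : Type*} [NormedAddCommGroup E] [InnerProductSpace ℝ E] [FiniteDimensional ℝ E]
    [NormedAddCommGroup F] [InnerProductSpace ℝ F] [FiniteDimensional ℝ F]
    (K : F →ₗ[ℝ] E) (h : F → ℝ) (hconv : ConvexOn ℝ Set.univ h)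
    (β : ℝ) (hβ : 0 < β) (q : E) (phat : F)
    (hmin : ∀ p : F, h phat + (β / 2) * ‖K phat - q‖ ^ 2 ≤
      h p + (β / 2) * ‖K p - q‖ ^ 2) :
    (⨆ p : F, ((⟪-(LinearMap.adjoint K (β • (K phat - q))), p⟫ - h p : ℝ) : EReal)) ≠ ⊤ ∧
      ∀ y : E,
        (⨆ p : F, ((⟪-(LinearMap.adjoint K (β • (K phat - q))), p⟫ - h p : ℝ) : EReal)) +
            ((1 / (2 * β) * ‖β • (K phat - q) + β • q‖ ^ 2 : ℝ) : EReal) ≤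
          (⨆ p : F, ((⟪-(LinearMap.adjoint K y), p⟫ - h p : ℝ) : EReal)) +
            ((1 / (2 * β) * ‖y + β • q‖ ^ 2 : ℝ) : EReal) := by
  set yhat : E := β • (K phat - q) with hy
  have key : ∀ p : F, (⟪-(LinearMap.adjoint K yhat), p⟫ - h p : ℝ) ≤
      ⟪-(LinearMap.adjoint K yhat), phat⟫ - h phat := by
    intro p
    have hs := subgrad_aux K h hconv β hβ q phat hmin p
    have e1 : ⟪-(LinearMap.adjoint K yhat), p⟫ = -(β * ⟪K phat - q, K p⟫) := by
      rw [inner_neg_left, LinearMap.adjoint_inner_left, hy, real_inner_smul_left]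
    have e2 : ⟪-(LinearMap.adjoint K yhat), phat⟫ = -(β * ⟪K phat - q, K phat⟫) := by
      rw [inner_neg_left, LinearMap.adjoint_inner_left, hy, real_inner_smul_left]
    rw [e1, e2]
    rw [inner_sub_right] at hs
    nlinarith [hs]
  have hsup : (⨆ p : F, ((⟪-(LinearMap.adjoint K yhat), p⟫ - h p : ℝ) : EReal)) =
      ((⟪-(LinearMap.adjoint K yhat), phat⟫ - h phat : ℝ) : EReal) := by
    refine le_antisymm (iSup_le fun p => ?_) (le_iSup (fun p : F =>
      ((⟪-(LinearMap.adjoint K yhat), p⟫ - h p : ℝ) : EReal)) phat)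
    exact_mod_cast key p
  constructor
  · rw [hsup]; exact EReal.coe_ne_top _
  · intro y
    rw [hsup]
    have hle : ((⟪-(LinearMap.adjoint K y), phat⟫ - h phat : ℝ) : EReal) ≤
        (⨆ p : F, ((⟪-(LinearMap.adjoint K y), p⟫ - h p : ℝ) : EReal)) :=
      le_iSup (fun p : F => ((⟪-(LinearMap.adjoint K y), p⟫ - h p : ℝ) : EReal)) phat
    refine le_trans ?_ (add_le_add_left hle _)
    rw [← EReal.coe_add, ← EReal.coe_add, EReal.coe_le_coe_iff]
    have e1 : ⟪-(LinearMap.adjoint K yhat), phat⟫ = -⟪yhat, K phat⟫ := by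
      rw [inner_neg_left, LinearMap.adjoint_inner_left]
    have e2 : ⟪-(LinearMap.adjoint K y), phat⟫ = -⟪y, K phat⟫ := by
      rw [inner_neg_left, LinearMap.adjoint_inner_left]
    rw [e1, e2]
    set a : E := K phat with ha
    have hya : yhat + β • q = β • a := by rw [hy, ha]; module
    have hn1 : ‖yhat + β • q‖ ^ 2 = β ^ 2 * ‖a‖ ^ 2 := by
      rw [hya, norm_smul, Real.norm_eq_abs, abs_of_pos hβ]; ring
    have hia : ⟪yhat, a⟫ = β * ‖a‖ ^ 2 - β * ⟪a, q⟫ := by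
      rw [hy, real_inner_smul_left, inner_sub_left, real_inner_self_eq_norm_sq,
        real_inner_comm q a]
      ring
    have hnn : 0 ≤ ‖y - yhat‖ ^ 2 := sq_nonneg _
    have hexp : ‖y - yhat‖ ^ 2 =
        ‖y‖ ^ 2 - 2 * (β * ⟪y, a⟫ - β * ⟪y, q⟫) +
          β ^ 2 * (‖a‖ ^ 2 - 2 * ⟪a, q⟫ + ‖q‖ ^ 2) := by
      rw [norm_sub_sq_real, hy, real_inner_smul_right, inner_sub_right, norm_smul,
        Real.norm_eq_abs, abs_of_pos hβ, mul_pow, norm_sub_sq_real a q]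
      ring
    have key2 : (0:ℝ) ≤ ‖y‖ ^ 2 - 2 * (β * ⟪y, a⟫ - β * ⟪y, q⟫) +
        β ^ 2 * (‖a‖ ^ 2 - 2 * ⟪a, q⟫ + ‖q‖ ^ 2) := hexp ▸ hnn
    have hexp2 : ‖y + β • q‖ ^ 2 = ‖y‖ ^ 2 + 2 * (β * ⟪y, q⟫) + β ^ 2 * ‖q‖ ^ 2 := by
      rw [norm_add_sq_real, real_inner_smul_right, norm_smul, Real.norm_eq_abs,
        abs_of_pos hβ]
      ring
    rw [hn1, hia, hexp2]
    rw [← sub_nonneg]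
    have hid : (-⟪y, a⟫ - h phat +
          1 / (2 * β) * (‖y‖ ^ 2 + 2 * (β * ⟪y, q⟫) + β ^ 2 * ‖q‖ ^ 2)) -
        (-(β * ‖a‖ ^ 2 - β * ⟪a, q⟫) - h phat + 1 / (2 * β) * (β ^ 2 * ‖a‖ ^ 2)) =
        1 / (2 * β) * (‖y‖ ^ 2 - 2 * (β * ⟪y, a⟫ - β * ⟪y, q⟫) +
          β ^ 2 * (‖a‖ ^ 2 - 2 * ⟪a, q⟫ + ‖q‖ ^ 2)) := by
      field_simp
      ring
    rw [hid]
    exact mul_nonneg (by positivity) key2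
end
end

section
/- Let X and Y be real inner product spaces, K : X → Y a linear map, τ > 0, γ = 1/τ, and Pf, Pg : Y → Y arbitrary maps. Let (x_k) be a sequence in X and (y_k), (z_k) sequences in Y. Define u_k = x_k, v_k = z_k, and w_k = (1/τ)(K x_k + τ z_k − y_k). Then the following two systems of recursions are equivalent (each holds for all k if and only if the other does): (ADMM form) γ K x_{k+1} + (z_k − γ y_k) = Pg(z_k − γ y_k), y_{k+1} = Pf(τ z_k + K x_{k+1}), z_{k+1} = z_k − γ(y_{k+1} − K x_{k+1}); (G-prox PDHG form) K u_{k+1} − K u_k + τ w_k = τ Pg(w_k − (1/τ) K u_k), τ v_{k+1} = τ v_k + K u_{k+1} − Pf(τ v_k + K u_{k+1}), w_{k+1} = 2 v_{k+1} − v_k. -/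
noncomputable section

/-- The purely algebraic change-of-variables equivalence between the
proximal form of ADMM (with step `γ = 1/τ`) and the proximal form of G-prox PDHG
(with step `τ`), for arbitrary maps `Pf`, `Pg` (Theorem 3.1 / Appendix C of the paper). -/
theorem admm_gprox_pdhg_recursion_equivalence
    {X Y : Type*} [NormedAddCommGroup X] [InnerProductSpace ℝ X]
    [NormedAddCommGroup Y] [InnerProductSpace ℝ Y]
    (K : X →ₗ[ℝ] Y) (τ γ : ℝ) (hτ : 0 < τ) (hγ : γ = 1 / τ)
    (Pf Pg : Y → Y)
    (x : ℕ → X) (y z : ℕ → Y)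
    (u : ℕ → X) (v w : ℕ → Y)
    (hu : ∀ k, u k = x k)
    (hv : ∀ k, v k = z k)
    (hw : ∀ k, w k = (1 / τ) • (K (x k) + τ • z k - y k)) :
    (∀ k : ℕ,
        γ • K (x (k + 1)) + (z k - γ • y k) = Pg (z k - γ • y k) ∧
        y (k + 1) = Pf (τ • z k + K (x (k + 1))) ∧
        z (k + 1) = z k - γ • (y (k + 1) - K (x (k + 1)))) ↔
      (∀ k : ℕ,
        K (u (k + 1)) - K (u k) + τ • w k = τ • Pg (w k - (1 / τ) • K (u k)) ∧
        τ • v (k + 1) = τ • v k + K (u (k + 1)) - Pf (τ • v k + K (u (k + 1))) ∧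
        w (k + 1) = (2 : ℝ) • v (k + 1) - v k) := by
  have ht : τ ≠ 0 := hτ.ne'
  subst hγ
  simp only [hu, hv, hw]
  have harg : ∀ k, (1 / τ) • (K (x k) + τ • z k - y k) - (1 / τ) • K (x k)
      = z k - (1 / τ) • y k := by
    intro k; match_scalars <;> field_simp <;> ring
  constructor
  · intro h k
    obtain ⟨h1, h2, h3⟩ := h k
    refine ⟨?_, ?_, ?_⟩
    · rw [harg, ← h1]; match_scalars <;> field_simp <;> ring
    · rw [← h2, h3]; match_scalars <;> field_simp <;> ring
    · rw [h3]; match_scalars <;> field_simp <;> ring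
  · intro h k
    obtain ⟨h1, h2, h3⟩ := h k
    rw [harg] at h1
    have hz : z (k + 1) = z k - (1 / τ) • (y (k + 1) - K (x (k + 1))) := by
      linear_combination (norm := match_scalars <;> field_simp <;> ring) -h3
    refine ⟨?_, ?_, hz⟩
    · linear_combination (norm := match_scalars <;> field_simp <;> ring) (1/τ) • h1
    · linear_combination (norm := match_scalars <;> field_simp <;> ring) τ • hz - h2
end
end

section
/- Let E be a finite-dimensional real inner product space, f, g : E → ℝ convex functions, γ > 0, and λ ∈ (0, 2). For a convex function φ : E → ℝ and t > 0, let prox_φ^t(x) denote the unique minimizer of z ↦ φ(z) + ‖z − x‖²/(2t); let φ*(w) = sup_z (⟨w, z⟩ − φ(z)) ∈ ℝ ∪ {+∞} be the convex conjugate, and let prox_{φ*}^t(x) denote the unique minimizer of w ↦ φ*(w) + ‖w − x‖²/(2t). Suppose sequences (s_k), (t_k) in E satisfy t_k = prox_f^γ(s_k) and s_{k+1} = s_k − λ t_k + λ prox_g^γ(2 t_k − s_k) for all k. Define q_k = s_k/γ and p_k = (s_k − t_k)/γ. Then for all k: p_k = prox_{f*}^{1/γ}(q_k) and q_{k+1}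 = q_k − λ p_k − λ prox_{g*}^{1/γ}(−2 p_k + q_k). -/
open scoped RealInnerProductSpace

noncomputable section

section MoreauAux
set_option linter.unusedSectionVars false

variable {E : Type*} [NormedAddCommGroup E] [InnerProductSpace ℝ E]

private lemma prox_le' (φ : E → ℝ) (γ : ℝ) (prox : E → E)
    (hprox : ∀ x z : E, z ≠ prox x →
      φ (prox x) + ‖prox x - x‖ ^ 2 / (2 * γ) < φ z + ‖z - x‖ ^ 2 / (2 * γ))
    (x z : E) :
    φ (prox x) + ‖prox x - x‖ ^ 2 / (2 * γ) ≤ φ z + ‖z - x‖ ^ 2 / (2 * γ) := by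
  by_cases h : z = prox x
  · subst h; exact le_rfl
  · exact (hprox x z h).le

private lemma subgrad' (φ : E → ℝ) (hφ : ConvexOn ℝ Set.univ φ) (γ : ℝ) (hγ : 0 < γ)
    (prox : E → E)
    (hprox : ∀ x z : E, z ≠ prox x →
      φ (prox x) + ‖prox x - x‖ ^ 2 / (2 * γ) < φ z + ‖z - x‖ ^ 2 / (2 * γ))
    (x z : E) :
    ⟪γ⁻¹ • (x - prox x), z - prox x⟫ ≤ φ z - φ (prox x) := by
  set u := prox x with hu
  have hin : ⟪γ⁻¹ • (x - u), z - u⟫ = -(γ⁻¹ * ⟪u - x, z - u⟫) := by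
    rw [real_inner_smul_left, inner_sub_left, inner_sub_left]; ring
  rw [hin]
  refine le_of_forall_pos_le_add fun ε hε => ?_
  set N : ℝ := ‖z - u‖ ^ 2 with hN
  have hNpos : (0:ℝ) < N + 1 := by positivity
  set θ : ℝ := min 1 (2 * γ * ε / (N + 1)) with hθdef
  have hθpos : 0 < θ := lt_min one_pos (by positivity)
  have hθ1 : θ ≤ 1 := min_le_left _ _
  have hθN : θ * (N + 1) ≤ 2 * γ * ε := (le_div_iff₀ hNpos).mp (min_le_right _ _)
  have hconv : φ ((1 - θ) • u + θ • z) ≤ (1 - θ) * φ u + θ * φ z :=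
    hφ.2 (Set.mem_univ u) (Set.mem_univ z) (by linarith) hθpos.le (by ring)
  have hkey := prox_le' φ γ prox hprox x ((1 - θ) • u + θ • z)
  rw [← hu] at hkey
  have heq : (1 - θ) • u + θ • z - x = (u - x) + θ • (z - u) := by module
  have hnorm : ‖(u - x) + θ • (z - u)‖ ^ 2
      = ‖u - x‖ ^ 2 + 2 * (θ * ⟪u - x, z - u⟫) + θ ^ 2 * N := by
    rw [norm_add_sq_real, real_inner_smul_right, norm_smul, Real.norm_eq_abs, mul_pow, sq_abs]
  rw [heq, hnorm] at hkey
  -- divide by θ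
  have h2γ : (0:ℝ) < 2 * γ := by linarith
  have hkey2 : 0 ≤ θ * ((φ z - φ u) + γ⁻¹ * ⟪u - x, z - u⟫ + θ * N / (2 * γ)) := by
    have : θ * ((φ z - φ u) + γ⁻¹ * ⟪u - x, z - u⟫ + θ * N / (2 * γ))
        = ((1 - θ) * φ u + θ * φ z + (‖u - x‖ ^ 2 + 2 * (θ * ⟪u - x, z - u⟫) + θ ^ 2 * N) / (2 * γ))
          - (φ u + ‖u - x‖ ^ 2 / (2 * γ)) := by
      field_simp
      ring
    rw [this]
    linarith
  have hdiv : 0 ≤ (φ z - φ u) + γ⁻¹ * ⟪u - x, z - u⟫ + θ * N / (2 * γ) :=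
    nonneg_of_mul_nonneg_right hkey2 hθpos
  have hsmall : θ * N / (2 * γ) ≤ ε := by
    rw [div_le_iff₀ h2γ]
    nlinarith [hθpos]
  linarith

private lemma conj_eq' (φ : E → ℝ) (hφ : ConvexOn ℝ Set.univ φ) (γ : ℝ) (hγ : 0 < γ)
    (prox : E → E)
    (hprox : ∀ x z : E, z ≠ prox x →
      φ (prox x) + ‖prox x - x‖ ^ 2 / (2 * γ) < φ z + ‖z - x‖ ^ 2 / (2 * γ))
    (x : E) :
    (⨆ z : E, ((⟪γ⁻¹ • (x - prox x), z⟫ - φ z : ℝ) : EReal))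
      = ((⟪γ⁻¹ • (x - prox x), prox x⟫ - φ (prox x) : ℝ) : EReal) := by
  apply le_antisymm
  · refine iSup_le fun z => EReal.coe_le_coe_iff.2 ?_
    have h := subgrad' φ hφ γ hγ prox hprox x z
    have hin : ⟪γ⁻¹ • (x - prox x), z - prox x⟫
        = ⟪γ⁻¹ • (x - prox x), z⟫ - ⟪γ⁻¹ • (x - prox x), prox x⟫ := by
      rw [inner_sub_right]
    linarith [h, hin.symm.le, hin.le]
  · exact le_iSup (fun z : E => ((⟪γ⁻¹ • (x - prox x), z⟫ - φ z : ℝ) : EReal)) (prox x)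

private lemma moreau' (φ : E → ℝ) (hφ : ConvexOn ℝ Set.univ φ) (γ : ℝ) (hγ : 0 < γ)
    (prox proxstar : E → E)
    (hprox : ∀ x z : E, z ≠ prox x →
      φ (prox x) + ‖prox x - x‖ ^ 2 / (2 * γ) < φ z + ‖z - x‖ ^ 2 / (2 * γ))
    (hproxstar : ∀ x w : E, w ≠ proxstar x →
      (⨆ z : E, ((⟪proxstar x, z⟫ - φ z : ℝ) : EReal)) +
          ((‖proxstar x - x‖ ^ 2 / (2 * (1 / γ)) : ℝ) : EReal) <
        (⨆ z : E, ((⟪w, z⟫ - φ z : ℝ) : EReal)) +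
          ((‖w - x‖ ^ 2 / (2 * (1 / γ)) : ℝ) : EReal))
    (x : E) :
    γ⁻¹ • (x - prox x) = proxstar (γ⁻¹ • x) := by
  set u := prox x with hu
  set w₀ : E := γ⁻¹ • (x - u) with hw₀
  set q : E := γ⁻¹ • x with hq
  by_contra hne
  set w' := proxstar q with hw'
  have hlt := hproxstar q w₀ hne
  have hF₀ : (⨆ z : E, ((⟪w₀, z⟫ - φ z : ℝ) : EReal)) = ((⟪w₀, u⟫ - φ u : ℝ) : EReal) :=
    conj_eq' φ hφ γ hγ prox hprox x
  have hlow : ((⟪w', u⟫ - φ u : ℝ) : EReal) ≤ ⨆ z : E, ((⟪w', z⟫ - φ z : ℝ) : EReal) :=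
    le_iSup (fun z : E => ((⟪w', z⟫ - φ z : ℝ) : EReal)) u
  -- real inequality
  have hq0 : w₀ - q = -(γ⁻¹ • u) := by rw [hw₀, hq]; module
  have hq' : w' - q = (w' - w₀) - γ⁻¹ • u := by rw [hw₀, hq]; module
  have hnorm0 : ‖w₀ - q‖ ^ 2 = (γ⁻¹) ^ 2 * ‖u‖ ^ 2 := by
    rw [hq0, norm_neg, norm_smul, Real.norm_eq_abs, mul_pow, sq_abs]
  have hnorm1 : ‖w' - q‖ ^ 2
      = ‖w' - w₀‖ ^ 2 - 2 * (γ⁻¹ * ⟪w' - w₀, u⟫) + (γ⁻¹) ^ 2 * ‖u‖ ^ 2 := by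
    rw [hq', norm_sub_sq_real, real_inner_smul_right, norm_smul, Real.norm_eq_abs, mul_pow, sq_abs]
  have hinner : ⟪w' - w₀, u⟫ = ⟪w', u⟫ - ⟪w₀, u⟫ := by rw [inner_sub_left]
  have hreal : ⟪w₀, u⟫ - φ u + ‖w₀ - q‖ ^ 2 / (2 * (1 / γ))
      ≤ ⟪w', u⟫ - φ u + ‖w' - q‖ ^ 2 / (2 * (1 / γ)) := by
    rw [hnorm0, hnorm1, hinner]
    have hc : (2 * (1 / γ) : ℝ) = 2 / γ := by ring
    rw [hc, div_div_eq_mul_div, div_div_eq_mul_div]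
    have h1 : γ * (γ⁻¹ * (⟪w', u⟫ - ⟪w₀, u⟫)) = ⟪w', u⟫ - ⟪w₀, u⟫ := by
      field_simp
    nlinarith [mul_nonneg hγ.le (sq_nonneg ‖w' - w₀‖), h1]
  have hchain : (⨆ z : E, ((⟪w₀, z⟫ - φ z : ℝ) : EReal)) +
        ((‖w₀ - q‖ ^ 2 / (2 * (1 / γ)) : ℝ) : EReal)
      ≤ (⨆ z : E, ((⟪w', z⟫ - φ z : ℝ) : EReal)) +
        ((‖w' - q‖ ^ 2 / (2 * (1 / γ)) : ℝ) : EReal) := by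
    rw [hF₀, ← EReal.coe_add]
    calc ((⟪w₀, u⟫ - φ u + ‖w₀ - q‖ ^ 2 / (2 * (1 / γ)) : ℝ) : EReal)
        ≤ ((⟪w', u⟫ - φ u + ‖w' - q‖ ^ 2 / (2 * (1 / γ)) : ℝ) : EReal) :=
          EReal.coe_le_coe_iff.2 hreal
      _ = ((⟪w', u⟫ - φ u : ℝ) : EReal) + ((‖w' - q‖ ^ 2 / (2 * (1 / γ)) : ℝ) : EReal) := by
          rw [← EReal.coe_add]
      _ ≤ (⨆ z : E, ((⟪w', z⟫ - φ z : ℝ) : EReal)) +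
            ((‖w' - q‖ ^ 2 / (2 * (1 / γ)) : ℝ) : EReal) := add_le_add_left hlow _
  exact absurd (lt_of_lt_of_le hlt hchain) (lt_irrefl _)

end MoreauAux

/-- Appendix B of the paper: equivalence of Douglas–Rachford splitting
(step `γ`, relaxation `λ`) on the primal problem `min f + g` with Douglas–Rachford
splitting (step `1/γ`, relaxation `λ`) on the dual problem `min f* (·) + g*(−·)`,
via `q_k = s_k/γ`, `p_k = (s_k − t_k)/γ`.  The proximal maps of the conjugates are
characterized as unique minimizers of `w ↦ φ*(w) + ‖w − x‖²/(2·(1/γ))` in `EReal`. -/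
theorem drs_primal_dual_equivalence
    {E : Type*} [NormedAddCommGroup E] [InnerProductSpace ℝ E] [FiniteDimensional ℝ E]
    (f g : E → ℝ) (hf : ConvexOn ℝ Set.univ f) (hg : ConvexOn ℝ Set.univ g)
    (γ lam : ℝ) (hγ : 0 < γ) (hlam : 0 < lam ∧ lam < 2)
    (proxf proxg proxfstar proxgstar : E → E)
    -- `prox_f^γ(x)` is the unique minimizer of `z ↦ f(z) + ‖z − x‖²/(2γ)`
    (hproxf : ∀ x z : E, z ≠ proxf x →
      f (proxf x) + ‖proxf x - x‖ ^ 2 / (2 * γ) < f z + ‖z - x‖ ^ 2 / (2 * γ))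
    (hproxg : ∀ x z : E, z ≠ proxg x →
      g (proxg x) + ‖proxg x - x‖ ^ 2 / (2 * γ) < g z + ‖z - x‖ ^ 2 / (2 * γ))
    -- `prox_{f*}^{1/γ}(x)` is the unique minimizer of `w ↦ f*(w) + ‖w − x‖²/(2·(1/γ))`
    (hproxfstar : ∀ x w : E, w ≠ proxfstar x →
      (⨆ z : E, ((⟪proxfstar x, z⟫ - f z : ℝ) : EReal)) +
          ((‖proxfstar x - x‖ ^ 2 / (2 * (1 / γ)) : ℝ) : EReal) <
        (⨆ z : E, ((⟪w, z⟫ - f z : ℝ) : EReal)) +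
          ((‖w - x‖ ^ 2 / (2 * (1 / γ)) : ℝ) : EReal))
    (hproxgstar : ∀ x w : E, w ≠ proxgstar x →
      (⨆ z : E, ((⟪proxgstar x, z⟫ - g z : ℝ) : EReal)) +
          ((‖proxgstar x - x‖ ^ 2 / (2 * (1 / γ)) : ℝ) : EReal) <
        (⨆ z : E, ((⟪w, z⟫ - g z : ℝ) : EReal)) +
          ((‖w - x‖ ^ 2 / (2 * (1 / γ)) : ℝ) : EReal))
    (s t : ℕ → E)
    (ht : ∀ k, t k = proxf (s k))
    (hs : ∀ k, s (k + 1) = s k - lam • t k + lam • proxg ((2 : ℝ) • t k - s k)) :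
    ∀ k : ℕ,
      γ⁻¹ • (s k - t k) = proxfstar (γ⁻¹ • s k) ∧
      γ⁻¹ • s (k + 1) =
        γ⁻¹ • s k - lam • (γ⁻¹ • (s k - t k)) -
          lam • proxgstar (-(2 : ℝ) • (γ⁻¹ • (s k - t k)) + γ⁻¹ • s k) := by
  intro k
  have h1 : γ⁻¹ • (s k - t k) = proxfstar (γ⁻¹ • s k) := by
    rw [ht k]
    exact moreau' f hf γ hγ proxf proxfstar hproxf hproxfstar (s k)
  refine ⟨h1, ?_⟩
  have harg : -(2 : ℝ) • (γ⁻¹ • (s k - t k)) + γ⁻¹ • s k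
      = γ⁻¹ • ((2 : ℝ) • t k - s k) := by module
  rw [harg, ← moreau' g hg γ hγ proxg proxgstar hproxg hproxgstar ((2 : ℝ) • t k - s k),
    hs k]
  module
end
end

section
/- Let τ > 0 and α > 0. For every q ∈ V, the vector (α/(α+τ)) S_τ(q) is the unique minimizer over z ∈ V of the function z ↦ Σ_{j=1}^N ‖z_j‖ + (1/(2α)) ‖z‖² + (1/(2τ)) ‖z − q‖². -/
open scoped RealInnerProductSpace
open scoped Classical

noncomputable section

lemma block_ineq {E : Type*} [NormedAddCommGroup E] [InnerProductSpace ℝ E]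
    (τ α : ℝ) (hτ : 0 < τ) (hα : 0 < α) (p x : E) {m : E}
    (hm : m = if ‖p‖ ≤ τ then 0 else ((α / (α + τ)) * (1 - τ / ‖p‖)) • p) :
    ‖m‖ + (1/(2*α))*‖m‖^2 + (1/(2*τ))*‖m-p‖^2 + ((α+τ)/(2*α*τ))*‖x-m‖^2
      ≤ ‖x‖ + (1/(2*α))*‖x‖^2 + (1/(2*τ))*‖x-p‖^2 := by
  have hατ : 0 < α + τ := by linarith
  have hnx : 0 ≤ ‖x‖ := norm_nonneg x
  have hip : ⟪x, p⟫ ≤ ‖x‖ * ‖p‖ := real_inner_le_norm x p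
  have hxp : ‖x - p‖^2 = ‖x‖^2 - 2*⟪x,p⟫ + ‖p‖^2 := norm_sub_sq_real x p
  by_cases h : ‖p‖ ≤ τ
  · rw [if_pos h] at hm
    subst hm
    simp only [norm_zero, zero_sub, norm_neg, sub_zero]
    have hK : (α+τ)/(2*α*τ) = 1/(2*α) + 1/(2*τ) := by field_simp; ring
    rw [hK, hxp]
    have h2 : ⟪x,p⟫ ≤ ‖x‖ * τ := le_trans hip (by nlinarith)
    have hv : (1/(2*τ))*(2*τ) = 1 := by field_simp
    nlinarith [mul_le_mul_of_nonneg_left h2 (by positivity : (0:ℝ) ≤ 2*(1/(2*τ)))]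
  · rw [if_neg h] at hm
    push_neg at h
    have hnp : 0 < ‖p‖ := lt_trans hτ h
    set c : ℝ := (α / (α + τ)) * (1 - τ / ‖p‖) with hc
    have hc0 : 0 ≤ c := by
      apply mul_nonneg (by positivity)
      have : τ / ‖p‖ < 1 := (div_lt_one hnp).mpr h
      linarith
    have hmn : ‖m‖ = c * ‖p‖ := by
      rw [hm, norm_smul, Real.norm_eq_abs, abs_of_nonneg hc0]
    have hmsq : ‖m‖^2 = c^2 * ‖p‖^2 := by rw [hmn]; ring
    have hmp : ‖m - p‖^2 = c^2*‖p‖^2 - 2*c*‖p‖^2 + ‖p‖^2 := by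
      rw [hm, norm_sub_sq_real, real_inner_smul_left, real_inner_self_eq_norm_sq,
        norm_smul, Real.norm_eq_abs, abs_of_nonneg hc0]
      ring
    have hxm : ‖x - m‖^2 = ‖x‖^2 - 2*c*⟪x,p⟫ + c^2*‖p‖^2 := by
      rw [hm, norm_sub_sq_real, real_inner_smul_right, norm_smul, Real.norm_eq_abs,
        abs_of_nonneg hc0]
      ring
    rw [hmsq, hmp, hxm, hxp, hmn, ← sub_nonneg]
    have key : ‖x‖ + 1 / (2 * α) * ‖x‖ ^ 2 + 1 / (2 * τ) * (‖x‖ ^ 2 - 2 * ⟪x, p⟫ + ‖p‖ ^ 2) -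
        (c * ‖p‖ + 1 / (2 * α) * (c ^ 2 * ‖p‖ ^ 2) +
          1 / (2 * τ) * (c ^ 2 * ‖p‖ ^ 2 - 2 * c * ‖p‖ ^ 2 + ‖p‖ ^ 2) +
          (α + τ) / (2 * α * τ) * (‖x‖ ^ 2 - 2 * c * ⟪x, p⟫ + c ^ 2 * ‖p‖ ^ 2)) =
        ‖x‖ - ⟪x,p⟫ / ‖p‖ := by
      rw [hc]
      field_simp
      ring
    rw [key, sub_nonneg, div_le_iff₀ hnp]
    linarith


/-- The proximal operator with step `τ` of the ℓ²-regularized isotropic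
(1,2)-norm `v ↦ Σ_j ‖v_j‖ + ‖v‖²/(2α)` is `(α/(α+τ)) S_τ`: for every `q`,
`(α/(α+τ)) S_τ(q)` is the unique minimizer of
`z ↦ Σ_j ‖z_j‖ + ‖z‖²/(2α) + ‖z − q‖²/(2τ)`. -/
theorem regularized_shrink_is_prox
    {N d : ℕ} (hN : 0 < N) (hd : 0 < d)
    (τ α : ℝ) (hτ : 0 < τ) (hα : 0 < α) (q : Vsp N d) :
    ∀ z : Vsp N d, z ≠ (α / (α + τ)) • shrink τ q →
      (∑ j, ‖((α / (α + τ)) • shrink τ q) j‖) +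
          (1 / (2 * α)) * ‖(α / (α + τ)) • shrink τ q‖ ^ 2 +
          (1 / (2 * τ)) * ‖(α / (α + τ)) • shrink τ q - q‖ ^ 2 <
        (∑ j, ‖z j‖) + (1 / (2 * α)) * ‖z‖ ^ 2 + (1 / (2 * τ)) * ‖z - q‖ ^ 2 := by
  intro z hz
  set c : ℝ := α / (α + τ) with hc
  set w : Vsp N d := c • shrink τ q with hw
  have hwj : ∀ j, w j = if ‖q j‖ ≤ τ then 0 else ((α / (α + τ)) * (1 - τ / ‖q j‖)) • q j := by
    intro j
    show c • (shrink τ q) j = _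
    unfold shrink
    simp only [PiLp.toLp_apply]
    by_cases h : ‖q j‖ ≤ τ
    · simp [h]
    · rw [if_neg h, if_neg h, hc, mul_smul]
      congr 1
      rw [sub_smul, one_smul, div_eq_inv_mul]
  have hblock : ∀ j, ‖w j‖ + (1/(2*α))*‖w j‖^2 + (1/(2*τ))*‖w j - q j‖^2
      + ((α+τ)/(2*α*τ))*‖z j - w j‖^2
      ≤ ‖z j‖ + (1/(2*α))*‖z j‖^2 + (1/(2*τ))*‖z j - q j‖^2 := fun j =>
    block_ineq τ α hτ hα (q j) (z j) (hwj j)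
  have hκ : 0 < (α+τ)/(2*α*τ) := by positivity
  have hex : ∃ j : Fin N, z j ≠ w j := by
    by_contra hcon
    push_neg at hcon
    exact hz (PiLp.ext hcon)
  obtain ⟨j₀, hj₀⟩ := hex
  have hnormsq : ∀ v : Vsp N d, ‖v‖^2 = ∑ j, ‖v j‖^2 := fun v =>
    PiLp.norm_sq_eq_of_L2 _ v
  have hsub : ∀ j, (w - q) j = w j - q j := fun j => rfl
  have hsub' : ∀ j, (z - q) j = z j - q j := fun j => rfl
  calc (∑ j, ‖w j‖) + (1 / (2 * α)) * ‖w‖ ^ 2 + (1 / (2 * τ)) * ‖w - q‖ ^ 2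
      = ∑ j, (‖w j‖ + (1/(2*α))*‖w j‖^2 + (1/(2*τ))*‖w j - q j‖^2) := by
        rw [hnormsq w, hnormsq (w - q), Finset.mul_sum, Finset.mul_sum,
          ← Finset.sum_add_distrib, ← Finset.sum_add_distrib]
        exact Finset.sum_congr rfl fun j _ => by rw [hsub j]
    _ < ∑ j, (‖z j‖ + (1/(2*α))*‖z j‖^2 + (1/(2*τ))*‖z j - q j‖^2) := by
        apply Finset.sum_lt_sum
        · intro j _
          have := hblock j
          nlinarith [sq_nonneg ‖z j - w j‖, hκ]
        · refine ⟨j₀, Finset.mem_univ _, ?_⟩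
          have h0 : 0 < ‖z j₀ - w j₀‖ := by
            rw [norm_pos_iff]
            exact sub_ne_zero.mpr hj₀
          have := hblock j₀
          nlinarith [mul_pos hκ (mul_pos h0 h0)]
    _ = (∑ j, ‖z j‖) + (1 / (2 * α)) * ‖z‖ ^ 2 + (1 / (2 * τ)) * ‖z - q‖ ^ 2 := by
        rw [hnormsq z, hnormsq (z - q), Finset.mul_sum, Finset.mul_sum,
          ← Finset.sum_add_distrib, ← Finset.sum_add_distrib]
        exact Finset.sum_congr rfl fun j _ => by rw [hsub' j]
end
end
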